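/- arXiv:1212.2346 — 3 statements merged into one kernel-verified Lean document; each statement's English description precedes it below -/
import Mathlib

section
/- Doubling lemma for triangle colorings: Let T be the triangle with vertices (0,0), (1,0), (0,1), and let c, q be positive integers. Suppose (i) every finite planar point set admits a 2-coloring such that every homothetic copy of T containing at least c points contains both colors, and (ii) the finite point set P admits a k-coloring φ such that every homothetic copy of T containing at least q points of P contains all k colors. Then P admits a 2k-coloring such that every homothetic copy of T containing at least c²·q points of P contains all 2k colors. -/
set_option maxHeartbeats 2000000


/-- A translate of the closed positive quadrant based at `(a, b)`. -/
def quadrant (a b : ℝ) : Set (ℝ × ℝ) := {p | a ≤ p.1 ∧ b ≤ p.2}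

/-- The standard triangle with vertices (0,0), (1,0), (0,1). -/
def stdT : Set (ℝ × ℝ) := {p | 0 ≤ p.1 ∧ 0 ≤ p.2 ∧ p.1 + p.2 ≤ 1}

/-- `S` is a homothetic copy (positive homothety plus translation) of `T`. -/
def IsHomCopy (T S : Set (ℝ × ℝ)) : Prop :=
  ∃ l : ℝ, 0 < l ∧ ∃ w : ℝ × ℝ, S = (fun v => l • v + w) '' T

/-- The coloring `φ` of `P` with `k` colors is polychromatic for homothetic
copies of `T` with threshold `m`: every homothetic copy of `T` containing at
least `m` points of `P` contains a point of each color. -/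
def PolyColor (T : Set (ℝ × ℝ)) (P : Finset (ℝ × ℝ)) (m k : ℕ)
    (φ : ℝ × ℝ → Fin k) : Prop :=
  ∀ S : Set (ℝ × ℝ), IsHomCopy T S → m ≤ ((P : Set (ℝ × ℝ)) ∩ S).ncard →
    ∀ i : Fin k, ∃ p ∈ P, p ∈ S ∧ φ p = i

lemma homo_set_eq (a b t : ℝ) (h : a + b < t) :
    (fun v : ℝ × ℝ => (t - a - b) • v + (a, b)) '' stdT
      = {p : ℝ × ℝ | a ≤ p.1 ∧ b ≤ p.2 ∧ p.1 + p.2 ≤ t} := by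
  have hl : (0:ℝ) < t - a - b := by linarith
  ext p
  constructor
  · rintro ⟨v, hv, rfl⟩
    obtain ⟨h1, h2, h3⟩ := hv
    constructor
    · simp only [Prod.fst_add, Prod.smul_fst, smul_eq_mul]
      nlinarith
    constructor
    · simp only [Prod.snd_add, Prod.smul_snd, smul_eq_mul]
      nlinarith
    · simp only [Prod.fst_add, Prod.snd_add, Prod.smul_fst, Prod.smul_snd, smul_eq_mul]
      nlinarith
  · rintro ⟨h1, h2, h3⟩
    refine ⟨((p.1 - a) / (t - a - b), (p.2 - b) / (t - a - b)), ⟨?_, ?_, ?_⟩, ?_⟩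
    · exact div_nonneg (by linarith) hl.le
    · exact div_nonneg (by linarith) hl.le
    · rw [← add_div, div_le_one hl]; linarith
    · ext <;> simp <;> field_simp <;> ring
lemma isHomCopy_tri (a b t : ℝ) (h : a + b < t) :
    IsHomCopy stdT {p : ℝ × ℝ | a ≤ p.1 ∧ b ≤ p.2 ∧ p.1 + p.2 ≤ t} :=
  ⟨t - a - b, by linarith, (a, b), (homo_set_eq a b t h).symm⟩

lemma isHomCopy_repr {S : Set (ℝ × ℝ)} (h : IsHomCopy stdT S) :
    ∃ a b t : ℝ, a + b < t ∧ S = {p : ℝ × ℝ | a ≤ p.1 ∧ b ≤ p.2 ∧ p.1 + p.2 ≤ t} := by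
  obtain ⟨l, hl, w, rfl⟩ := h
  refine ⟨w.1, w.2, l + w.1 + w.2, by linarith, ?_⟩
  rw [← homo_set_eq w.1 w.2 (l + w.1 + w.2) (by linarith)]
  have e : l + w.1 + w.2 - w.1 - w.2 = l := by ring
  rw [e]

lemma exists_gap (F : Finset ℝ) : ∃ δ : ℝ, 0 < δ ∧ ∀ x ∈ F, ∀ y ∈ F, x < y → x < y - δ := by
  classical
  set D := ((F ×ˢ F).filter fun z => z.1 < z.2).image fun z => z.2 - z.1 with hD
  have hpos : ∀ d ∈ D, 0 < d := by
    intro d hd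
    simp only [hD, Finset.mem_image, Finset.mem_filter, Finset.mem_product] at hd
    obtain ⟨⟨x, y⟩, ⟨_, hlt⟩, rfl⟩ := hd
    simpa using sub_pos.mpr hlt
  by_cases hne : D.Nonempty
  · refine ⟨D.min' hne / 2, by have := hpos _ (D.min'_mem hne); linarith, ?_⟩
    intro x hx y hy hxy
    have hmem : y - x ∈ D := by
      simp only [hD, Finset.mem_image, Finset.mem_filter, Finset.mem_product]
      exact ⟨(x, y), ⟨⟨hx, hy⟩, hxy⟩, rfl⟩
    have h1 := Finset.min'_le D _ hmem
    have h2 := hpos _ (D.min'_mem hne)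
    linarith
  · refine ⟨1, one_pos, fun x hx y hy hxy => absurd ?_ hne⟩
    exact ⟨y - x, by
      simp only [hD, Finset.mem_image, Finset.mem_filter, Finset.mem_product]
      exact ⟨(x, y), ⟨⟨hx, hy⟩, hxy⟩, rfl⟩⟩


lemma key {k : ℕ} (c q : ℕ) (hc : 0 < c) (hq : 0 < q) (P : Finset (ℝ × ℝ))
    (φ : ℝ × ℝ → Fin k) (hφ : PolyColor stdT P q k φ) (S : Set (ℝ × ℝ))
    (hS : IsHomCopy stdT S) (hcard : c ^ 2 * q ≤ ((P : Set (ℝ × ℝ)) ∩ S).ncard)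
    (i : Fin k) :
    c ≤ ((((P.filter fun p => φ p = i) : Finset (ℝ × ℝ)) : Set (ℝ × ℝ)) ∩ S).ncard := by
  classical
  by_contra hcon
  push_neg at hcon
  obtain ⟨a₀, b₀, t₀, hS0, hSe⟩ := isHomCopy_repr hS
  set inS : ℝ × ℝ → Prop := fun p => a₀ ≤ p.1 ∧ b₀ ≤ p.2 ∧ p.1 + p.2 ≤ t₀ with hinS
  set A : Finset (ℝ × ℝ) := P.filter inS with hA
  set G : Finset (ℝ × ℝ) := P.filter (fun p => φ p = i ∧ inS p) with hG
  have hGP : ∀ g ∈ G, g ∈ P := fun g hg => (Finset.mem_filter.mp hg).1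
  have hGA : G ⊆ A := by
    intro g hg
    simp only [hG, hA, Finset.mem_filter] at hg ⊢
    exact ⟨hg.1, hg.2.2⟩
  have hAcard : c ^ 2 * q ≤ A.card := by
    rw [hSe] at hcard
    have : ((P : Set (ℝ × ℝ)) ∩ {p : ℝ × ℝ | a₀ ≤ p.1 ∧ b₀ ≤ p.2 ∧ p.1 + p.2 ≤ t₀}) = ↑A := by
      ext p; simp [hA, hinS, Set.mem_setOf_eq, and_comm]
    rwa [this, Set.ncard_coe_finset] at hcard
  have hGcard : G.card < c := by
    have : (((P.filter fun p => φ p = i) : Finset (ℝ × ℝ)) : Set (ℝ × ℝ)) ∩ S = ↑G := by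
      rw [hSe]; ext p
      simp only [Set.mem_inter_iff, Finset.coe_filter, Set.mem_setOf_eq, hG, Finset.mem_coe,
        Finset.mem_filter, hinS]
      tauto
    rwa [this, Set.ncard_coe_finset] at hcon
  -- gap structure
  set F : Finset ℝ := P.image (fun p => p.1) ∪ P.image (fun p => p.2) ∪
      P.image (fun p => p.1 + p.2) ∪ {a₀, b₀, t₀} with hF
  obtain ⟨δ, hδ, hgap⟩ := exists_gap F
  have hF1 : ∀ p ∈ P, p.1 ∈ F := by
    intro p hp
    simp only [hF, Finset.mem_union, Finset.mem_image]
    exact Or.inl (Or.inl (Or.inl ⟨p, hp, rfl⟩))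
  have hF2 : ∀ p ∈ P, p.2 ∈ F := by
    intro p hp
    simp only [hF, Finset.mem_union, Finset.mem_image]
    exact Or.inl (Or.inl (Or.inr ⟨p, hp, rfl⟩))
  have hFs : ∀ p ∈ P, p.1 + p.2 ∈ F := by
    intro p hp
    simp only [hF, Finset.mem_union, Finset.mem_image]
    exact Or.inl (Or.inr ⟨p, hp, rfl⟩)
  have hFa : a₀ ∈ F := by simp [hF]
  have hFb : b₀ ∈ F := by simp [hF]
  have hFt : t₀ ∈ F := by simp [hF]
  set B : Finset (ℝ × ℝ) := A \ G with hB
  have hBP : ∀ p ∈ B, p ∈ P := by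
    intro p hp
    exact (Finset.mem_filter.mp (Finset.mem_sdiff.mp hp).1).1
  have hBS : ∀ p ∈ B, inS p := by
    intro p hp
    exact (Finset.mem_filter.mp (Finset.mem_sdiff.mp hp).1).2
  have hBG : ∀ p ∈ B, p ∉ G := fun p hp => (Finset.mem_sdiff.mp hp).2
  set jf : ℝ × ℝ → ℕ := fun p => (G.filter fun g => g.1 + g.2 ≤ p.1 + p.2).card with hjf
  set mf : ℝ × ℝ → ℕ :=
    fun p => (G.filter fun g => (g.1 + g.2 ≤ p.1 + p.2) ∧ g.1 < p.1).card with hmf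
  set κ : ℝ × ℝ → ℕ × ℕ := fun p => (jf p, mf p) with hκ
  have fiber : ∀ v : ℕ × ℕ, (B.filter fun p => κ p = v).card ≤ q - 1 := by
    intro v
    set Φ := B.filter fun p => κ p = v with hΦ
    rcases Φ.eq_empty_or_nonempty with hE | hne
    · simp [hE]
    have hΦB : ∀ p ∈ Φ, p ∈ B := fun p hp => (Finset.mem_filter.mp hp).1
    have hΦP : ∀ p ∈ Φ, p ∈ P := fun p hp => hBP p (hΦB p hp)
    have hcardj : ∀ p ∈ Φ, (G.filter fun g => g.1 + g.2 ≤ p.1 + p.2).card = v.1 := by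
      intro p hp
      have h2 := (Finset.mem_filter.mp hp).2
      simp only [hκ, hjf] at h2
      exact (Prod.ext_iff.mp h2).1
    have hcardm : ∀ p ∈ Φ,
        (G.filter fun g => (g.1 + g.2 ≤ p.1 + p.2) ∧ g.1 < p.1).card = v.2 := by
      intro p hp
      have h2 := (Finset.mem_filter.mp hp).2
      simp only [hκ, hmf] at h2
      exact (Prod.ext_iff.mp h2).2
    set ax := (Φ.image fun p => p.1).min' (hne.image _) with hax
    set bx := (Φ.image fun p => p.2).min' (hne.image _) with hbx
    set tx := (Φ.image fun p => p.1 + p.2).max' (hne.image _) with htx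
    have hax_le : ∀ p ∈ Φ, ax ≤ p.1 := fun p hp =>
      Finset.min'_le (Φ.image fun p => p.1) p.1 (Finset.mem_image_of_mem _ hp)
    have hbx_le : ∀ p ∈ Φ, bx ≤ p.2 := fun p hp =>
      Finset.min'_le (Φ.image fun p => p.2) p.2 (Finset.mem_image_of_mem _ hp)
    have htx_ge : ∀ p ∈ Φ, p.1 + p.2 ≤ tx := fun p hp =>
      Finset.le_max' (Φ.image fun p => p.1 + p.2) (p.1 + p.2)
        (Finset.mem_image_of_mem _ hp)
    obtain ⟨pa, hpaΦ, hpa⟩ : ∃ p ∈ Φ, p.1 = ax := by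
      have h := Finset.min'_mem (Φ.image fun p => p.1) (hne.image _)
      rw [Finset.mem_image] at h
      exact h
    obtain ⟨pb, hpbΦ, hpb⟩ : ∃ p ∈ Φ, p.2 = bx := by
      have h := Finset.min'_mem (Φ.image fun p => p.2) (hne.image _)
      rw [Finset.mem_image] at h
      exact h
    obtain ⟨pt, hptΦ, hpt⟩ : ∃ p ∈ Φ, p.1 + p.2 = tx := by
      have h := Finset.max'_mem (Φ.image fun p => p.1 + p.2) (hne.image _)
      rw [Finset.mem_image] at h
      exact h
    have K1 : ∀ p ∈ Φ, ∀ p' ∈ Φ, (G.filter fun g => g.1 + g.2 ≤ p.1 + p.2)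
        = (G.filter fun g => g.1 + g.2 ≤ p'.1 + p'.2) := by
      intro p hp p' hp'
      rcases le_total (p.1 + p.2) (p'.1 + p'.2) with h | h
      · apply Finset.eq_of_subset_of_card_le
        · intro g hg
          rw [Finset.mem_filter] at hg ⊢
          exact ⟨hg.1, le_trans hg.2 h⟩
        · rw [hcardj p' hp', hcardj p hp]
      · symm
        apply Finset.eq_of_subset_of_card_le
        · intro g hg
          rw [Finset.mem_filter] at hg ⊢
          exact ⟨hg.1, le_trans hg.2 h⟩
        · rw [hcardj p' hp', hcardj p hp]
    have K2 : ∀ p ∈ Φ, ∀ p' ∈ Φ,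
        (G.filter fun g => (g.1 + g.2 ≤ p.1 + p.2) ∧ g.1 < p.1)
        = (G.filter fun g => (g.1 + g.2 ≤ p'.1 + p'.2) ∧ g.1 < p'.1) := by
      have step : ∀ p ∈ Φ, ∀ p' ∈ Φ, p.1 ≤ p'.1 →
          (G.filter fun g => (g.1 + g.2 ≤ p.1 + p.2) ∧ g.1 < p.1)
          ⊆ (G.filter fun g => (g.1 + g.2 ≤ p'.1 + p'.2) ∧ g.1 < p'.1) := by
        intro p hp p' hp' h g hg
        rw [Finset.mem_filter] at hg ⊢
        refine ⟨hg.1, ?_, lt_of_lt_of_le hg.2.2 h⟩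
        have hmem : g ∈ G.filter fun g' => g'.1 + g'.2 ≤ p.1 + p.2 :=
          Finset.mem_filter.mpr ⟨hg.1, hg.2.1⟩
        rw [K1 p hp p' hp'] at hmem
        exact (Finset.mem_filter.mp hmem).2
      intro p hp p' hp'
      rcases le_total p.1 p'.1 with h | h
      · exact Finset.eq_of_subset_of_card_le (step p hp p' hp' h)
          (by rw [hcardm p' hp', hcardm p hp])
      · exact (Finset.eq_of_subset_of_card_le (step p' hp' p hp h)
          (by rw [hcardm p' hp', hcardm p hp])).symm
    obtain ⟨p₀, hp₀⟩ := hne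
    have avoid : ∀ g ∈ G, ¬(ax - δ ≤ g.1 ∧ bx - δ ≤ g.2 ∧ g.1 + g.2 ≤ tx + δ) := by
      intro g hgG hgmem
      obtain ⟨hg1, hg2, hg3⟩ := hgmem
      by_cases hs : g.1 + g.2 ≤ p₀.1 + p₀.2
      · have hsall : ∀ p ∈ Φ, g.1 + g.2 ≤ p.1 + p.2 := by
          intro p hp
          have hmem : g ∈ G.filter fun g' => g'.1 + g'.2 ≤ p₀.1 + p₀.2 :=
            Finset.mem_filter.mpr ⟨hgG, hs⟩
          rw [K1 p₀ hp₀ p hp] at hmem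
          exact (Finset.mem_filter.mp hmem).2
        by_cases hx : g.1 < p₀.1
        · have hxall : ∀ p ∈ Φ, g.1 < p.1 := by
            intro p hp
            have hmem : g ∈ G.filter fun g' => (g'.1 + g'.2 ≤ p₀.1 + p₀.2) ∧ g'.1 < p₀.1 :=
              Finset.mem_filter.mpr ⟨hgG, hs, hx⟩
            rw [K2 p₀ hp₀ p hp] at hmem
            exact (Finset.mem_filter.mp hmem).2.2
          have h1 : g.1 < ax := hpa ▸ hxall pa hpaΦ
          have h2 := hgap g.1 (hF1 g (hGP g hgG)) ax (hpa ▸ hF1 pa (hΦP pa hpaΦ)) h1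
          linarith
        · have hyall : ∀ p ∈ Φ, g.2 < p.2 := by
            intro p hp
            have hnx : ¬ g.1 < p.1 := by
              intro hlt
              have hmem : g ∈ G.filter fun g' => (g'.1 + g'.2 ≤ p.1 + p.2) ∧ g'.1 < p.1 :=
                Finset.mem_filter.mpr ⟨hgG, hsall p hp, hlt⟩
              rw [K2 p hp p₀ hp₀] at hmem
              exact hx (Finset.mem_filter.mp hmem).2.2
            by_contra hny
            push_neg at hnx hny
            have hsp := hsall p hp
            have e1 : p.1 = g.1 := by linarith
            have e2 : p.2 = g.2 := by linarith
            have : p = g := Prod.ext e1 e2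
            exact (hBG p (hΦB p hp)) (this ▸ hgG)
          have h1 : g.2 < bx := hpb ▸ hyall pb hpbΦ
          have h2 := hgap g.2 (hF2 g (hGP g hgG)) bx (hpb ▸ hF2 pb (hΦP pb hpbΦ)) h1
          linarith
      · have hsall : ∀ p ∈ Φ, ¬ g.1 + g.2 ≤ p.1 + p.2 := by
          intro p hp hle
          have hmem : g ∈ G.filter fun g' => g'.1 + g'.2 ≤ p.1 + p.2 :=
            Finset.mem_filter.mpr ⟨hgG, hle⟩
          rw [K1 p hp p₀ hp₀] at hmem
          exact hs (Finset.mem_filter.mp hmem).2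
        have h1 : tx < g.1 + g.2 := hpt ▸ (lt_of_not_ge (hsall pt hptΦ))
        have h2 := hgap tx (hpt ▸ hFs pt (hΦP pt hptΦ)) (g.1 + g.2) (hFs g (hGP g hgG)) h1
        linarith
    set H : Set (ℝ × ℝ) := {p : ℝ × ℝ | ax - δ ≤ p.1 ∧ bx - δ ≤ p.2 ∧ p.1 + p.2 ≤ tx + δ}
      with hH
    have hHcopy : IsHomCopy stdT H := isHomCopy_tri _ _ _ (by
      have h1 := hax_le p₀ hp₀
      have h2 := hbx_le p₀ hp₀
      have h3 := htx_ge p₀ hp₀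
      linarith)
    have hHS : ∀ p ∈ P, p ∈ H → inS p := by
      intro p hpP hpH
      obtain ⟨h1, h2, h3⟩ := hpH
      have ha0 : a₀ ≤ ax := hpa ▸ (hBS pa (hΦB pa hpaΦ)).1
      have hb0 : b₀ ≤ bx := hpb ▸ (hBS pb (hΦB pb hpbΦ)).2.1
      have ht0 : tx ≤ t₀ := hpt ▸ (hBS pt (hΦB pt hptΦ)).2.2
      refine ⟨?_, ?_, ?_⟩
      · by_contra hlt
        push_neg at hlt
        have := hgap p.1 (hF1 p hpP) a₀ hFa hlt
        linarith
      · by_contra hlt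
        push_neg at hlt
        have := hgap p.2 (hF2 p hpP) b₀ hFb hlt
        linarith
      · by_contra hlt
        push_neg at hlt
        have := hgap t₀ hFt (p.1 + p.2) (hFs p hpP) hlt
        linarith
    have hsmall : ((P : Set (ℝ × ℝ)) ∩ H).ncard < q := by
      by_contra hbig
      push_neg at hbig
      obtain ⟨p', hp'P, hp'H, hp'c⟩ := hφ H hHcopy hbig i
      have hp'G : p' ∈ G := Finset.mem_filter.mpr ⟨hp'P, hp'c, hHS p' hp'P hp'H⟩
      exact avoid p' hp'G hp'H
    have hsub : Φ ⊆ P.filter (· ∈ H) := by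
      intro p hp
      rw [Finset.mem_filter]
      refine ⟨hΦP p hp, ?_⟩
      show ax - δ ≤ p.1 ∧ bx - δ ≤ p.2 ∧ p.1 + p.2 ≤ tx + δ
      have u1 := hax_le p hp
      have u2 := hbx_le p hp
      have u3 := htx_ge p hp
      exact ⟨by linarith, by linarith, by linarith⟩
    have hHcard : ((P : Set (ℝ × ℝ)) ∩ H).ncard = (P.filter (· ∈ H)).card := by
      rw [← Set.ncard_coe_finset]
      congr 1
      ext p
      simp [and_comm]
    have hle := Finset.card_le_card hsub
    rw [hHcard] at hsmall
    omega
  have himg : B.image κ ⊆ Finset.range c ×ˢ Finset.range c := by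
    intro v hv
    rw [Finset.mem_image] at hv
    obtain ⟨p, hp, rfl⟩ := hv
    rw [Finset.mem_product, Finset.mem_range, Finset.mem_range]
    constructor
    · exact lt_of_le_of_lt (Finset.card_filter_le _ _) hGcard
    · exact lt_of_le_of_lt (Finset.card_filter_le _ _) hGcard
  have hBcard : B.card ≤ (c * c) * (q - 1) := by
    rw [Finset.card_eq_sum_card_fiberwise (fun x hx => Finset.mem_image_of_mem κ hx)]
    calc ∑ v ∈ B.image κ, (B.filter fun p => κ p = v).card
        ≤ (B.image κ).card * (q - 1) := by
          have := Finset.sum_le_card_nsmul (B.image κ)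
            (fun v => (B.filter fun p => κ p = v).card) (q - 1) (fun v _ => fiber v)
          simpa using this
      _ ≤ (c * c) * (q - 1) := by
          apply Nat.mul_le_mul_right
          calc (B.image κ).card ≤ (Finset.range c ×ˢ Finset.range c).card :=
                Finset.card_le_card himg
            _ = c * c := by simp
  have hsplit : A.card = G.card + B.card := by
    have h1 := Finset.card_sdiff_of_subset hGA
    have h2 := Finset.card_le_card hGA
    rw [← hB] at h1
    omega
  have hc2 : c ^ 2 = c * c := sq c
  have hX : c ≤ c * c := Nat.le_mul_of_pos_left c hc
  rw [hc2] at hAcard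
  obtain ⟨q', rfl⟩ : ∃ q', q = q' + 1 := ⟨q - 1, by omega⟩
  have hfin : c * c * q' + c * c ≤ c * c * q' + (c - 1) := by
    calc c * c * q' + c * c = c * c * (q' + 1) := by ring
      _ ≤ A.card := hAcard
      _ = G.card + B.card := hsplit
      _ ≤ (c - 1) + c * c * q' := by
          have hg : G.card ≤ c - 1 := by omega
          have hb : B.card ≤ c * c * q' := by simpa using hBcard
          omega
      _ = c * c * q' + (c - 1) := by ring
  have hcc : c * c ≤ c - 1 := le_of_add_le_add_left hfin
  have : c ≤ c - 1 := le_trans hX hcc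
  omega


theorem stmt_7 (c q k : ℕ) (hc : 0 < c) (hq : 0 < q) (hk : 0 < k)
    (h2 : ∀ P : Finset (ℝ × ℝ), ∃ φ : ℝ × ℝ → Fin 2, PolyColor stdT P c 2 φ)
    (P : Finset (ℝ × ℝ)) (φ : ℝ × ℝ → Fin k) (hφ : PolyColor stdT P q k φ) :
    ∃ ψ : ℝ × ℝ → Fin (2 * k), PolyColor stdT P (c ^ 2 * q) (2 * k) ψ := by
  classical
  choose χ hχ using fun i : Fin k => h2 (P.filter fun p => φ p = i)
  refine ⟨fun p => finProdFinEquiv (χ (φ p) p, φ p), ?_⟩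
  intro S hS hcard col
  set z := finProdFinEquiv.symm col with hz
  obtain ⟨p, hpPi, hpS, hb⟩ := hχ z.2 S hS (key c q hc hq P φ hφ S hS hcard z.2) z.1
  rw [Finset.mem_filter] at hpPi
  refine ⟨p, hpPi.1, hpS, ?_⟩
  have he : (χ (φ p) p, φ p) = z := by
    have h2' := hpPi.2
    rw [h2']
    exact Prod.ext hb rfl
  show finProdFinEquiv (χ (φ p) p, φ p) = col
  rw [he, hz, Equiv.apply_symm_apply]
end

section
/- Assuming the 2-color result p(2) ≤ 12 (every finite planar point set has a 2-coloring such that every homothetic copy of a fixed triangle T containing at least 12 points contains both colors), every finite planar point set has, for each k ≥ 1, a 2^k-coloring such that every homothetic copy of T containing at least 12^(2k−1) points contains all 2^k colors. -/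
noncomputable section

namespace Stmt11

/-- sum functional -/
def sg (p : ℝ × ℝ) : ℝ := p.1 + p.2

/-- corner triangle -/
def tri (a b t : ℝ) : Set (ℝ × ℝ) := {p | a ≤ p.1 ∧ b ≤ p.2 ∧ p.1 + p.2 ≤ t}

lemma mem_tri {a b t : ℝ} {p : ℝ × ℝ} :
    p ∈ tri a b t ↔ a ≤ p.1 ∧ b ≤ p.2 ∧ p.1 + p.2 ≤ t := Iff.rfl

lemma image_stdT (l : ℝ) (hl : 0 < l) (w : ℝ × ℝ) :
    (fun v => l • v + w) '' stdT = tri w.1 w.2 (w.1 + w.2 + l) := by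
  have hl' : l ≠ 0 := ne_of_gt hl
  ext p
  constructor
  · rintro ⟨v, ⟨h1, h2, h3⟩, rfl⟩
    simp only [mem_tri, Prod.fst_add, Prod.snd_add, Prod.smul_fst, Prod.smul_snd,
      smul_eq_mul]
    exact ⟨by nlinarith, by nlinarith, by nlinarith⟩
  · rintro ⟨h1, h2, h3⟩
    refine ⟨((p.1 - w.1) / l, (p.2 - w.2) / l), ⟨?_, ?_, ?_⟩, ?_⟩
    · exact div_nonneg (by linarith) hl.le
    · exact div_nonneg (by linarith) hl.le
    · rw [← add_div, div_le_one hl]; linarith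
    · apply Prod.ext
      · simp only [Prod.fst_add, Prod.smul_fst, smul_eq_mul]; field_simp; ring
      · simp only [Prod.snd_add, Prod.smul_snd, smul_eq_mul]; field_simp; ring

lemma tri_homCopy {a b t : ℝ} (h : a + b < t) : IsHomCopy stdT (tri a b t) := by
  refine ⟨t - a - b, by linarith, (a, b), ?_⟩
  rw [image_stdT _ (by linarith)]
  norm_num

lemma homCopy_tri {S : Set (ℝ × ℝ)} (h : IsHomCopy stdT S) :
    ∃ a b t, a + b < t ∧ S = tri a b t := by
  obtain ⟨l, hl, w, rfl⟩ := h
  exact ⟨w.1, w.2, w.1 + w.2 + l, by linarith, image_stdT l hl w⟩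

open Classical in
lemma ncard_inter_eq (P : Finset (ℝ × ℝ)) (S : Set (ℝ × ℝ)) :
    ((P : Set (ℝ × ℝ)) ∩ S).ncard = (P.filter (fun p => p ∈ S)).card := by
  rw [← Set.ncard_coe_finset]
  congr 1
  ext p
  simp


noncomputable def thr1 (pq : (ℝ × ℝ) × (ℝ × ℝ)) : ℝ :=
  if pq.1.1 < pq.2.1 ∧ pq.2.2 < pq.1.2 then (pq.2.1 - pq.1.1) / (pq.1.2 - pq.2.2) else 1

noncomputable def thr2 (pq : (ℝ × ℝ) × (ℝ × ℝ)) : ℝ :=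
  if sg pq.1 < sg pq.2 ∧ pq.2.2 < pq.1.2 then (sg pq.2 - sg pq.1) / (pq.1.2 - pq.2.2) else 1

lemma thr1_pos (pq : (ℝ × ℝ) × (ℝ × ℝ)) : 0 < thr1 pq := by
  rw [thr1]; split
  · next h => exact div_pos (by linarith [h.1]) (by linarith [h.2])
  · norm_num

lemma thr2_pos (pq : (ℝ × ℝ) × (ℝ × ℝ)) : 0 < thr2 pq := by
  rw [thr2]; split
  · next h => exact div_pos (by linarith [h.1]) (by linarith [h.2])
  · norm_num

open Classical in
lemma exists_eps (P : Finset (ℝ × ℝ)) :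
    ∃ ε : ℝ, 0 < ε ∧
      (∀ p ∈ P, ∀ q ∈ P, p.1 < q.1 → p.1 + ε * p.2 < q.1 + ε * q.2) ∧
      (∀ p ∈ P, ∀ q ∈ P, sg p < sg q → sg p + ε * p.2 < sg q + ε * q.2) := by
  classical
  set B : Finset ℝ := insert 1 (((P ×ˢ P).image thr1) ∪ ((P ×ˢ P).image thr2)) with hB
  have hBne : B.Nonempty := ⟨1, Finset.mem_insert_self _ _⟩
  have hBpos : ∀ x ∈ B, 0 < x := by
    intro x hx
    rw [hB, Finset.mem_insert, Finset.mem_union] at hx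
    rcases hx with rfl | hx | hx
    · norm_num
    · obtain ⟨pq, _, rfl⟩ := Finset.mem_image.1 hx; exact thr1_pos pq
    · obtain ⟨pq, _, rfl⟩ := Finset.mem_image.1 hx; exact thr2_pos pq
  set ε := B.min' hBne / 2 with hε
  have hεpos : 0 < ε := by
    have := hBpos _ (B.min'_mem hBne)
    rw [hε]; linarith
  have hεlt : ∀ x ∈ B, ε < x := by
    intro x hx
    have h1 := B.min'_le x hx
    have h2 := hBpos _ (B.min'_mem hBne)
    rw [hε]; linarith
  refine ⟨ε, hεpos, ?_, ?_⟩
  · intro p hp q hq h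
    by_cases hy : q.2 < p.2
    · have hmem : thr1 (p, q) ∈ B := by
        rw [hB, Finset.mem_insert, Finset.mem_union]
        exact Or.inr (Or.inl (Finset.mem_image_of_mem thr1 (Finset.mem_product.2 ⟨hp, hq⟩)))
      have hlt := hεlt _ hmem
      rw [thr1, if_pos ⟨h, hy⟩] at hlt
      have hd : 0 < p.2 - q.2 := by linarith
      have : ε * (p.2 - q.2) < q.1 - p.1 := by
        have := (lt_div_iff₀ hd).1 hlt
        linarith
      nlinarith
    · push_neg at hy
      have : ε * p.2 ≤ ε * q.2 := by nlinarith
      linarith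
  · intro p hp q hq h
    by_cases hy : q.2 < p.2
    · have hmem : thr2 (p, q) ∈ B := by
        rw [hB, Finset.mem_insert, Finset.mem_union]
        exact Or.inr (Or.inr (Finset.mem_image_of_mem thr2 (Finset.mem_product.2 ⟨hp, hq⟩)))
      have hlt := hεlt _ hmem
      rw [thr2, if_pos ⟨h, hy⟩] at hlt
      have hd : 0 < p.2 - q.2 := by linarith
      have : ε * (p.2 - q.2) < sg q - sg p := by
        have := (lt_div_iff₀ hd).1 hlt
        linarith
      nlinarith
    · push_neg at hy
      have : ε * p.2 ≤ ε * q.2 := by nlinarith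
      linarith

open Classical in
noncomputable def trace (Q : Finset (ℝ × ℝ)) (c : ℝ × ℝ) (t : ℝ) : Finset (ℝ × ℝ) :=
  Q.filter (fun p => c.1 ≤ p.1 ∧ c.2 ≤ p.2 ∧ sg p ≤ t)

lemma mem_trace {Q : Finset (ℝ × ℝ)} {c : ℝ × ℝ} {t : ℝ} {p : ℝ × ℝ} :
    p ∈ trace Q c t ↔ p ∈ Q ∧ c.1 ≤ p.1 ∧ c.2 ≤ p.2 ∧ sg p ≤ t := by
  classical
  simp [trace]

open Classical in
lemma lemG (Q : Finset (ℝ × ℝ)) (hinj : ∀ p ∈ Q, ∀ q ∈ Q, sg p = sg q → p = q)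
    (Zf : Finset (ℝ × ℝ)) :
    Zf ⊆ Q → ∀ C : Finset (ℝ × ℝ),
    ∃ D : Finset ((ℝ × ℝ) × ℝ),
      D.card ≤ C.card + 2 * Zf.card ∧
      (∀ d ∈ D, ∃ c ∈ C, c.1 ≤ d.1.1 ∧ c.2 ≤ d.1.2) ∧
      (∀ d ∈ D, ∀ z ∈ Zf, z ∉ trace Q d.1 d.2) ∧
      (∀ q ∈ Q, q ∉ Zf → (∃ c ∈ C, c.1 ≤ q.1 ∧ c.2 ≤ q.2) →
        ∃ d ∈ D, q ∈ trace Q d.1 d.2) := by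
  classical
  induction Zf using Finset.strongInduction with
  | _ Zf IH =>
  intro hZQ C
  rcases Zf.eq_empty_or_nonempty with rfl | hne
  · -- base case
    set tmax : ℝ := if hQ : Q.Nonempty then (Q.image sg).max' (hQ.image sg) else 0 with htmax
    refine ⟨C.image (fun c => (c, tmax)), ?_, ?_, ?_, ?_⟩
    · simpa using Finset.card_image_le
    · intro d hd
      obtain ⟨c, hc, rfl⟩ := Finset.mem_image.1 hd
      exact ⟨c, hc, le_refl _, le_refl _⟩
    · intro d _ z hz; simp at hz
    · intro q hq _ ⟨c, hc, h1, h2⟩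
      refine ⟨(c, tmax), Finset.mem_image_of_mem _ hc, ?_⟩
      rw [mem_trace]
      refine ⟨hq, h1, h2, ?_⟩
      rw [htmax, dif_pos ⟨q, hq⟩]
      exact Finset.le_max' _ _ (Finset.mem_image_of_mem sg hq)
  · -- main case
    obtain ⟨z₁, hz₁Zf, hz₁min⟩ := Zf.exists_min_image sg hne
    have hz₁Q : z₁ ∈ Q := hZQ hz₁Zf
    set K : Finset (ℝ × ℝ) := C.filter (fun c => c.1 ≤ z₁.1 ∧ c.2 ≤ z₁.2) with hKdef
    have hKC : K ⊆ C := Finset.filter_subset _ _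
    by_cases hKne : K.Nonempty
    · -- spawn sets
      set xs : Finset ℝ := (Q.filter (fun w => z₁.1 < w.1)).image Prod.fst with hxs
      set ys : Finset ℝ := (Q.filter (fun w => z₁.2 < w.2)).image Prod.snd with hys
      set Kys : Finset ℝ := K.image Prod.snd with hKys
      set Kxs : Finset ℝ := K.image Prod.fst with hKxs
      set E1 : Finset (ℝ × ℝ) :=
        if hx : xs.Nonempty then {(xs.min' hx, Kys.min' (hKne.image _))} else ∅ with hE1
      set E2 : Finset (ℝ × ℝ) :=
        if hy : ys.Nonempty then {(Kxs.min' (hKne.image _), ys.min' hy)} else ∅ with hE2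
      set C' : Finset (ℝ × ℝ) := ((C \ K) ∪ E1) ∪ E2 with hC'
      -- properties of E1/E2 members
      have hE1mem : ∀ e ∈ E1, (∃ c ∈ K, c.2 = e.2) ∧ z₁.1 < e.1 ∧ e.1 ∈ xs := by
        intro e he
        rw [hE1] at he
        split at he
        · next hx =>
          rw [Finset.mem_singleton] at he
          subst he
          have h1 : xs.min' hx ∈ xs := Finset.min'_mem _ _
          have h2 : Kys.min' (hKne.image _) ∈ Kys := Finset.min'_mem _ _
          obtain ⟨c, hcK, hc2⟩ := Finset.mem_image.1 h2
          obtain ⟨w, hw, hw1⟩ := Finset.mem_image.1 h1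
          have hwgt := (Finset.mem_filter.1 hw).2
          refine ⟨⟨c, hcK, hc2⟩, ?_, h1⟩
          show z₁.1 < xs.min' hx
          rw [← hw1]; exact hwgt
        · exact absurd he (Finset.notMem_empty e)
      have hE2mem : ∀ e ∈ E2, (∃ c ∈ K, c.1 = e.1) ∧ z₁.2 < e.2 ∧ e.2 ∈ ys := by
        intro e he
        rw [hE2] at he
        split at he
        · next hy =>
          rw [Finset.mem_singleton] at he
          subst he
          have h1 : ys.min' hy ∈ ys := Finset.min'_mem _ _
          have h2 : Kxs.min' (hKne.image _) ∈ Kxs := Finset.min'_mem _ _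
          obtain ⟨c, hcK, hc1⟩ := Finset.mem_image.1 h2
          obtain ⟨w, hw, hw2⟩ := Finset.mem_image.1 h1
          have hwgt := (Finset.mem_filter.1 hw).2
          refine ⟨⟨c, hcK, hc1⟩, ?_, h1⟩
          show z₁.2 < ys.min' hy
          rw [← hw2]; exact hwgt
        · exact absurd he (Finset.notMem_empty e)
      -- cap value
      set lows : Finset ℝ := (Q.filter (fun w => sg w < sg z₁)).image sg with hlows
      set tcap : ℝ := if h : lows.Nonempty then lows.max' h else sg z₁ - 1 with htcap
      have htcap_lt : tcap < sg z₁ := by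
        rw [htcap]
        split
        · next h =>
          obtain ⟨w, hw, hw1⟩ := Finset.mem_image.1 (Finset.max'_mem lows h)
          rw [← hw1]
          exact (Finset.mem_filter.1 hw).2
        · linarith
      -- recursion
      have hss : Zf.erase z₁ ⊂ Zf := Finset.erase_ssubset hz₁Zf
      obtain ⟨D', hD'card, hD'dom, hD'avoid, hD'cover⟩ :=
        IH (Zf.erase z₁) hss (fun z hz => hZQ (Finset.erase_subset _ _ hz)) C'
      set D : Finset ((ℝ × ℝ) × ℝ) := K.image (fun c => (c, tcap)) ∪ D' with hD
      -- dominance of D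
      have hdomC' : ∀ c' ∈ C', ∃ c ∈ C, c.1 ≤ c'.1 ∧ c.2 ≤ c'.2 := by
        intro c' hc'
        rw [hC', Finset.mem_union, Finset.mem_union] at hc'
        rcases hc' with (hc' | hc') | hc'
        · exact ⟨c', (Finset.mem_sdiff.1 hc').1, le_refl _, le_refl _⟩
        · obtain ⟨⟨c, hcK, hc2⟩, hgt, _⟩ := hE1mem _ hc'
          refine ⟨c, hKC hcK, ?_, le_of_eq hc2⟩
          have := (Finset.mem_filter.1 (hKdef ▸ hcK)).2
          linarith [this.1]
        · obtain ⟨⟨c, hcK, hc1⟩, hgt, _⟩ := hE2mem _ hc'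
          refine ⟨c, hKC hcK, le_of_eq hc1, ?_⟩
          have := (Finset.mem_filter.1 (hKdef ▸ hcK)).2
          linarith [this.2]
      refine ⟨D, ?_, ?_, ?_, ?_⟩
      · -- card
        have h1 : D.card ≤ K.card + D'.card := by
          calc D.card ≤ (K.image (fun c => (c, tcap))).card + D'.card := Finset.card_union_le _ _
            _ ≤ K.card + D'.card := by gcongr; exact Finset.card_image_le
        have h2 : (Zf.erase z₁).card = Zf.card - 1 := Finset.card_erase_of_mem hz₁Zf
        have h3 : C'.card ≤ (C.card - K.card) + 1 + 1 := by
          have e1 : E1.card ≤ 1 := by rw [hE1]; split <;> simp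
          have e2 : E2.card ≤ 1 := by rw [hE2]; split <;> simp
          have : (C \ K).card = C.card - K.card := Finset.card_sdiff_of_subset hKC
          calc C'.card ≤ ((C \ K) ∪ E1).card + E2.card := Finset.card_union_le _ _
            _ ≤ (C \ K).card + E1.card + E2.card := by gcongr; exact Finset.card_union_le _ _
            _ ≤ (C.card - K.card) + 1 + 1 := by rw [this]; omega
        have h4 : K.card ≤ C.card := Finset.card_le_card hKC
        have h5 : 1 ≤ K.card := Finset.card_pos.2 hKne
        have h6 : 1 ≤ Zf.card := Finset.card_pos.2 hne
        omega
      · -- dom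
        intro d hd
        rw [hD, Finset.mem_union] at hd
        rcases hd with hd | hd
        · obtain ⟨c, hcK, rfl⟩ := Finset.mem_image.1 hd
          exact ⟨c, hKC hcK, le_refl _, le_refl _⟩
        · obtain ⟨c', hc', h1, h2⟩ := hD'dom d hd
          obtain ⟨c, hc, g1, g2⟩ := hdomC' c' hc'
          exact ⟨c, hc, le_trans g1 h1, le_trans g2 h2⟩
      · -- avoid
        intro d hd z hz htr
        rw [hD, Finset.mem_union] at hd
        rcases hd with hd | hd
        · obtain ⟨c, hcK, rfl⟩ := Finset.mem_image.1 hd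
          rw [mem_trace] at htr
          have := hz₁min z hz
          simp only at htr
          linarith [htr.2.2.2, htcap_lt]
        · by_cases hzz : z = z₁
          · subst hzz
            rw [mem_trace] at htr
            obtain ⟨c', hc', h1, h2⟩ := hD'dom d hd
            rw [hC', Finset.mem_union, Finset.mem_union] at hc'
            rcases hc' with (hc' | hc') | hc'
            · have hcK : c' ∈ K := by
                rw [hKdef, Finset.mem_filter]
                exact ⟨(Finset.mem_sdiff.1 hc').1,
                  le_trans h1 htr.2.1, le_trans h2 htr.2.2.1⟩
              exact (Finset.mem_sdiff.1 hc').2 hcK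
            · obtain ⟨_, hgt, _⟩ := hE1mem _ hc'
              linarith [le_trans h1 htr.2.1]
            · obtain ⟨_, hgt, _⟩ := hE2mem _ hc'
              linarith [le_trans h2 htr.2.2.1]
          · exact hD'avoid d hd z (Finset.mem_erase.2 ⟨hzz, hz⟩) htr
      · -- cover
        intro q hqQ hqZf hex
        by_cases hC'ex : ∃ c' ∈ C', c'.1 ≤ q.1 ∧ c'.2 ≤ q.2
        · obtain ⟨d, hd, htr⟩ := hD'cover q hqQ
            (fun h => hqZf (Finset.erase_subset _ _ h)) hC'ex
          refine ⟨d, ?_, htr⟩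
          rw [hD, Finset.mem_union]
          exact Or.inr hd
        · obtain ⟨c, hcC, h1, h2⟩ := hex
          have hcK : c ∈ K := by
            by_contra hcKn
            apply hC'ex
            refine ⟨c, ?_, h1, h2⟩
            rw [hC', Finset.mem_union, Finset.mem_union]
            exact Or.inl (Or.inl (Finset.mem_sdiff.2 ⟨hcC, hcKn⟩))
          have hqz₁ : q ≠ z₁ := fun h => hqZf (h ▸ hz₁Zf)
          have hsgne : sg q ≠ sg z₁ := fun h => hqz₁ (hinj q hqQ z₁ hz₁Q h)
          have hsglt : sg q < sg z₁ := by
            by_contra hge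
            push_neg at hge
            have hgt : sg z₁ < sg q := lt_of_le_of_ne hge (Ne.symm hsgne)
            have hcase : z₁.1 < q.1 ∨ z₁.2 < q.2 := by
              by_contra hc
              push_neg at hc
              have hle : sg q ≤ sg z₁ := add_le_add hc.1 hc.2
              linarith
            rcases hcase with hcase | hcase
            · have hxne : xs.Nonempty := ⟨q.1, by
                rw [hxs]; exact Finset.mem_image_of_mem _ (Finset.mem_filter.2 ⟨hqQ, hcase⟩)⟩
              have he1 : (xs.min' hxne, Kys.min' (hKne.image _)) ∈ E1 := by
                rw [hE1, dif_pos hxne]; exact Finset.mem_singleton_self _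
              apply hC'ex
              refine ⟨(xs.min' hxne, Kys.min' (hKne.image _)), ?_, ?_, ?_⟩
              · rw [hC', Finset.mem_union, Finset.mem_union]
                exact Or.inl (Or.inr he1)
              · exact Finset.min'_le _ _
                  (Finset.mem_image_of_mem _ (Finset.mem_filter.2 ⟨hqQ, hcase⟩))
              · have hh : Kys.min' (hKne.image _) ≤ c.2 :=
                  Finset.min'_le _ _ (Finset.mem_image_of_mem _ hcK)
                exact le_trans hh h2
            · have hyne : ys.Nonempty := ⟨q.2, by
                rw [hys]; exact Finset.mem_image_of_mem _ (Finset.mem_filter.2 ⟨hqQ, hcase⟩)⟩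
              have he2 : (Kxs.min' (hKne.image _), ys.min' hyne) ∈ E2 := by
                rw [hE2, dif_pos hyne]; exact Finset.mem_singleton_self _
              apply hC'ex
              refine ⟨(Kxs.min' (hKne.image _), ys.min' hyne), ?_, ?_, ?_⟩
              · rw [hC', Finset.mem_union]
                exact Or.inr he2
              · have hh : Kxs.min' (hKne.image _) ≤ c.1 :=
                  Finset.min'_le _ _ (Finset.mem_image_of_mem _ hcK)
                exact le_trans hh h1
              · exact Finset.min'_le _ _
                  (Finset.mem_image_of_mem _ (Finset.mem_filter.2 ⟨hqQ, hcase⟩))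
          -- q is low: covered by emitted piece (c, tcap)
          have hlowsne : lows.Nonempty :=
            ⟨sg q, Finset.mem_image_of_mem _ (Finset.mem_filter.2 ⟨hqQ, hsglt⟩)⟩
          refine ⟨(c, tcap), ?_, ?_⟩
          · rw [hD, Finset.mem_union]
            exact Or.inl (Finset.mem_image_of_mem _ hcK)
          · rw [mem_trace]
            refine ⟨hqQ, h1, h2, ?_⟩
            rw [htcap, dif_pos hlowsne]
            exact Finset.le_max' _ _
              (Finset.mem_image_of_mem _ (Finset.mem_filter.2 ⟨hqQ, hsglt⟩))
    · -- K empty: no corner killed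
      have hss : Zf.erase z₁ ⊂ Zf := Finset.erase_ssubset hz₁Zf
      obtain ⟨D', hD'card, hD'dom, hD'avoid, hD'cover⟩ :=
        IH (Zf.erase z₁) hss (fun z hz => hZQ (Finset.erase_subset _ _ hz)) C
      refine ⟨D', ?_, hD'dom, ?_, ?_⟩
      · have h2 : (Zf.erase z₁).card = Zf.card - 1 := Finset.card_erase_of_mem hz₁Zf
        have h6 : 1 ≤ Zf.card := Finset.card_pos.2 hne
        omega
      · intro d hd z hz htr
        by_cases hzz : z = z₁
        · subst hzz
          rw [mem_trace] at htr
          obtain ⟨c', hc', g1, g2⟩ := hD'dom d hd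
          have : c' ∈ K := by
            rw [hKdef, Finset.mem_filter]
            exact ⟨hc', le_trans g1 htr.2.1, le_trans g2 htr.2.2.1⟩
          exact hKne ⟨c', this⟩
        · exact hD'avoid d hd z (Finset.mem_erase.2 ⟨hzz, hz⟩) htr
      · intro q hqQ hqZf hex
        exact hD'cover q hqQ (fun h => hqZf (Finset.erase_subset _ _ h)) hex

open Classical in
lemma lemmaA (h12 : ∀ P : Finset (ℝ × ℝ), ∃ φ : ℝ × ℝ → Fin 2, PolyColor stdT P 12 2 φ)
    (P : Finset (ℝ × ℝ)) :
    ∃ φ : ℝ × ℝ → Fin 2, ∀ m : ℕ, 1 ≤ m → ∀ S : Set (ℝ × ℝ), IsHomCopy stdT S →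
      144 * m ≤ ((P : Set (ℝ × ℝ)) ∩ S).ncard → ∀ i : Fin 2,
      m ≤ (P.filter (fun p => p ∈ S ∧ φ p = i)).card := by
  classical
  obtain ⟨ε, hε, hs1, hs2⟩ := exists_eps P
  set J : ℝ × ℝ → ℝ × ℝ := fun p => (p.1 + ε * p.2, p.2) with hJ
  have hJinj : Function.Injective J := by
    intro p q h
    have h2 : (J p).2 = (J q).2 := congrArg Prod.snd h
    have h1 : (J p).1 = (J q).1 := congrArg Prod.fst h
    have h2' : p.2 = q.2 := h2
    have h1' : p.1 + ε * p.2 = q.1 + ε * q.2 := h1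
    have h0 : p.1 = q.1 := by rw [h2'] at h1'; linarith
    exact Prod.ext h0 h2'
  have hsgJ : ∀ p, sg (J p) = sg p + ε * p.2 := by
    intro p; simp only [hJ, sg]; ring
  obtain ⟨φt, hφt⟩ := h12 (P.image J)
  refine ⟨fun p => φt (J p), ?_⟩
  intro m hm S hS hcard i
  obtain ⟨a, b, t, habt, rfl⟩ := homCopy_tri hS
  rw [ncard_inter_eq] at hcard
  set T : Finset (ℝ × ℝ) := P.filter (fun p => p ∈ tri a b t) with hT
  have hTP : T ⊆ P := Finset.filter_subset _ _
  have hTne : T.Nonempty := Finset.card_pos.1 (by omega)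
  set Qt : Finset (ℝ × ℝ) := T.image J with hQt
  have hQtne : Qt.Nonempty := hTne.image J
  have hQtcard : Qt.card = T.card := Finset.card_image_of_injective _ hJinj
  set at' : ℝ := (Qt.image Prod.fst).min' (hQtne.image _) with hat
  set bt : ℝ := (Qt.image Prod.snd).min' (hQtne.image _) with hbt
  set tt : ℝ := (Qt.image sg).max' (hQtne.image _) with htt
  have hQtb : ∀ u ∈ Qt, at' ≤ u.1 ∧ bt ≤ u.2 ∧ sg u ≤ tt := by
    intro u hu
    exact ⟨Finset.min'_le _ _ (Finset.mem_image_of_mem _ hu),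
      Finset.min'_le _ _ (Finset.mem_image_of_mem _ hu),
      Finset.le_max' _ _ (Finset.mem_image_of_mem _ hu)⟩
  have htrans : ∀ p ∈ P, at' ≤ (J p).1 → bt ≤ (J p).2 → sg (J p) ≤ tt → p ∈ T := by
    intro p hp ha hb ht'
    obtain ⟨u1, hu1Q, hu1⟩ := Finset.mem_image.1
      (Finset.min'_mem (Qt.image Prod.fst) (hQtne.image _))
    obtain ⟨p1, hp1T, hp1e⟩ := Finset.mem_image.1 hu1Q
    obtain ⟨u2, hu2Q, hu2⟩ := Finset.mem_image.1
      (Finset.min'_mem (Qt.image Prod.snd) (hQtne.image _))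
    obtain ⟨p2, hp2T, hp2e⟩ := Finset.mem_image.1 hu2Q
    obtain ⟨u3, hu3Q, hu3⟩ := Finset.mem_image.1
      (Finset.max'_mem (Qt.image sg) (hQtne.image _))
    obtain ⟨p3, hp3T, hp3e⟩ := Finset.mem_image.1 hu3Q
    have hp1tri := (Finset.mem_filter.1 hp1T).2
    have hp2tri := (Finset.mem_filter.1 hp2T).2
    have hp3tri := (Finset.mem_filter.1 hp3T).2
    rw [mem_tri] at hp1tri hp2tri hp3tri
    -- x bound
    have hx : p1.1 ≤ p.1 := by
      by_contra hlt
      push_neg at hlt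
      have := hs1 p hp p1 (hTP hp1T) hlt
      have he : (J p1).1 = at' := by rw [hp1e]; exact hu1
      have : (J p).1 < at' := by
        rw [← he]; exact this
      linarith [ha]
    -- y bound
    have hy : p2.2 ≤ p.2 := by
      have he : (J p2).2 = bt := by rw [hp2e]; exact hu2
      have : bt = p2.2 := by rw [← he]
      have hJp2 : (J p).2 = p.2 := rfl
      linarith [hb, this, hJp2.le]
    -- sum bound
    have hsgle : sg p ≤ sg p3 := by
      by_contra hlt
      push_neg at hlt
      have := hs2 p3 (hTP hp3T) p hp hlt
      have he : sg (J p3) = tt := by rw [hp3e]; exact hu3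
      have : tt < sg (J p) := by
        rw [← he, hsgJ, hsgJ]; exact this
      linarith [ht']
    rw [hT, Finset.mem_filter]
    refine ⟨hp, ?_⟩
    rw [mem_tri]
    have hsg3 : p3.1 + p3.2 ≤ t := hp3tri.2.2
    have : p.1 + p.2 ≤ p3.1 + p3.2 := hsgle
    exact ⟨le_trans hp1tri.1 hx, le_trans hp2tri.2.1 hy, by linarith⟩
  have hinjQ : ∀ u ∈ Qt, ∀ v ∈ Qt, sg u = sg v → u = v := by
    intro u hu v hv h
    obtain ⟨p, hpT, rfl⟩ := Finset.mem_image.1 hu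
    obtain ⟨q, hqT, rfl⟩ := Finset.mem_image.1 hv
    rcases lt_trichotomy (sg p) (sg q) with hlt | heq | hgt
    · have := hs2 p (hTP hpT) q (hTP hqT) hlt
      rw [hsgJ, hsgJ] at h
      exact absurd h (by intro hh; linarith)
    · rw [hsgJ, hsgJ, heq] at h
      have h2 : p.2 = q.2 := by
        have hmul : ε * p.2 = ε * q.2 := by linarith
        exact mul_left_cancel₀ (ne_of_gt hε) hmul
      have h1 : p.1 = q.1 := by
        simp only [sg] at heq; linarith
      rw [Prod.ext h1 h2]
    · have := hs2 q (hTP hqT) p (hTP hpT) hgt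
      rw [hsgJ, hsgJ] at h
      exact absurd h (by intro hh; linarith)
  by_contra hcon
  push_neg at hcon
  set Z : Finset (ℝ × ℝ) := Qt.filter (fun u => φt u = i) with hZ
  have hZQt : Z ⊆ Qt := Finset.filter_subset _ _
  have hZcard : Z.card = (P.filter (fun p => p ∈ tri a b t ∧ φt (J p) = i)).card := by
    have h1 : Z = (T.filter (fun p => φt (J p) = i)).image J := by
      rw [hZ, hQt, Finset.filter_image]
    rw [h1, Finset.card_image_of_injective _ hJinj, hT, Finset.filter_filter]
  rw [← hZcard] at hcon
  obtain ⟨D, hDcard, hDdom, hDavoid, hDcover⟩ := lemG Qt hinjQ Z hZQt {(at', bt)}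
  have hheavy : ∃ d ∈ D, 12 ≤ (trace Qt d.1 d.2).card := by
    by_contra hh
    push_neg at hh
    have hsub : Qt \ Z ⊆ D.biUnion (fun d => trace Qt d.1 d.2) := by
      intro q hq
      rw [Finset.mem_sdiff] at hq
      obtain ⟨d, hd, htr⟩ := hDcover q hq.1 hq.2
        ⟨(at', bt), Finset.mem_singleton_self _, (hQtb q hq.1).1, (hQtb q hq.1).2.1⟩
      exact Finset.mem_biUnion.2 ⟨d, hd, htr⟩
    have hc1 := Finset.card_le_card hsub
    have hc2 := Finset.card_biUnion_le (s := D) (t := fun d => trace Qt d.1 d.2)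
    have hc3 : ∑ d ∈ D, (trace Qt d.1 d.2).card ≤ ∑ _d ∈ D, 11 :=
      Finset.sum_le_sum (fun d hd => Nat.lt_succ_iff.1 (hh d hd))
    rw [Finset.sum_const, smul_eq_mul] at hc3
    rw [Finset.card_sdiff_of_subset hZQt] at hc1
    have hc4 : D.card ≤ 1 + 2 * Z.card := by simpa using hDcard
    have hc5 : 144 * m ≤ Qt.card := by rw [hQtcard]; exact hcard
    omega
  obtain ⟨d, hd, hheavy12⟩ := hheavy
  set A : ℝ := max d.1.1 at' with hA
  set B : ℝ := max d.1.2 bt with hB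
  set Tt : ℝ := min d.2 tt with hTt
  have hfil : (P.image J).filter (fun u => u ∈ tri A B Tt) = trace Qt d.1 d.2 := by
    ext u
    simp only [Finset.mem_filter, mem_trace, mem_tri]
    constructor
    · rintro ⟨huP, hA', hB', hT'⟩
      obtain ⟨p, hp, rfl⟩ := Finset.mem_image.1 huP
      have hp' : p ∈ T := htrans p hp (le_trans (le_max_right _ _) hA')
        (le_trans (le_max_right _ _) hB') (le_trans hT' (min_le_right _ _))
      exact ⟨Finset.mem_image_of_mem _ hp', le_trans (le_max_left _ _) hA',
        le_trans (le_max_left _ _) hB', le_trans hT' (min_le_left _ _)⟩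
    · rintro ⟨huQ, h1', h2', h3'⟩
      obtain ⟨hb1, hb2, hb3⟩ := hQtb u huQ
      have huP : u ∈ P.image J := by
        obtain ⟨p, hpT, rfl⟩ := Finset.mem_image.1 huQ
        exact Finset.mem_image_of_mem _ (hTP hpT)
      exact ⟨huP, max_le h1' hb1, max_le h2' hb2, le_min h3' hb3⟩
  have hABTt : A + B < Tt := by
    by_contra hc
    push_neg at hc
    have h2le : 1 < (trace Qt d.1 d.2).card := by omega
    obtain ⟨u, hu, v, hv, huv⟩ := Finset.one_lt_card.1 h2le
    have key : ∀ w ∈ trace Qt d.1 d.2, w.1 = A ∧ w.2 = B := by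
      intro w hw
      rw [mem_trace] at hw
      obtain ⟨hb1, hb2, hb3⟩ := hQtb w hw.1
      have hA1 : A ≤ w.1 := max_le hw.2.1 hb1
      have hB1 : B ≤ w.2 := max_le hw.2.2.1 hb2
      have hT1 : w.1 + w.2 ≤ Tt := le_min hw.2.2.2 hb3
      constructor <;> linarith
    obtain ⟨ku1, ku2⟩ := key u hu
    obtain ⟨kv1, kv2⟩ := key v hv
    exact huv (Prod.ext (by rw [ku1, kv1]) (by rw [ku2, kv2]))
  have hnc : 12 ≤ ((↑(P.image J) : Set (ℝ × ℝ)) ∩ tri A B Tt).ncard := by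
    rw [ncard_inter_eq, hfil]; exact hheavy12
  obtain ⟨u, huP, huS, hui⟩ := hφt (tri A B Tt) (tri_homCopy hABTt) hnc i
  have hutr : u ∈ trace Qt d.1 d.2 := by
    rw [← hfil]; exact Finset.mem_filter.2 ⟨huP, huS⟩
  have huZ : u ∈ Z := Finset.mem_filter.2 ⟨(mem_trace.1 hutr).1, hui⟩
  exact hDavoid d hd u huZ hutr

end Stmt11

open Stmt11

theorem stmt_11
    (h12 : ∀ P : Finset (ℝ × ℝ), ∃ φ : ℝ × ℝ → Fin 2, PolyColor stdT P 12 2 φ) :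
    ∀ k : ℕ, 1 ≤ k → ∀ P : Finset (ℝ × ℝ),
      ∃ ψ : ℝ × ℝ → Fin (2 ^ k), PolyColor stdT P (12 ^ (2 * k - 1)) (2 ^ k) ψ := by
  classical
  intro k hk
  induction k, hk using Nat.le_induction with
  | base =>
    intro P
    obtain ⟨φ, hφ⟩ := h12 P
    have h1 : (2:ℕ)^1 = 2 := by norm_num
    refine ⟨fun p => Fin.cast h1.symm (φ p), ?_⟩
    intro S hS hcard i
    obtain ⟨p, hp, hpS, hpi⟩ := hφ S hS (by simpa using hcard) (Fin.cast h1 i)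
    refine ⟨p, hp, hpS, ?_⟩
    show Fin.cast h1.symm (φ p) = i
    rw [hpi]
    apply Fin.ext
    simp
  | succ k hk IH =>
    intro P
    obtain ⟨φ, hφA⟩ := lemmaA h12 P
    have hps : ∀ c : Fin 2, ∃ ψc : ℝ × ℝ → Fin (2^k),
        PolyColor stdT (P.filter (fun p => φ p = c)) (12^(2*k-1)) (2^k) ψc :=
      fun c => IH (P.filter (fun p => φ p = c))
    choose s hs using hps
    have hcast : (2:ℕ)^(k+1) = 2^k * 2 := by rw [pow_succ]
    refine ⟨fun p => Fin.cast hcast.symm (finProdFinEquiv (s (φ p) p, φ p)), ?_⟩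
    intro S hS hcard i
    set x := finProdFinEquiv.symm (Fin.cast hcast i) with hx
    have hix : Fin.cast hcast.symm (finProdFinEquiv x) = i := by
      rw [hx, Equiv.apply_symm_apply]
      apply Fin.ext
      simp
    have hM1 : 1 ≤ 12^(2*k-1) := Nat.one_le_pow _ _ (by norm_num)
    have harith : 12^(2*(k+1)-1) = 144 * 12^(2*k-1) := by
      have h1 : 2*(k+1)-1 = (2*k-1) + 2 := by omega
      rw [h1, pow_add]
      ring
    rw [harith] at hcard
    have hcnt := hφA (12^(2*k-1)) hM1 S hS hcard x.2
    have hQ : ((↑(P.filter (fun p => φ p = x.2)) : Set (ℝ×ℝ)) ∩ S).ncard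
        = (P.filter (fun p => p ∈ S ∧ φ p = x.2)).card := by
      rw [ncard_inter_eq, Finset.filter_filter]
      congr 1
      ext p
      simp only [Finset.mem_filter]
      tauto
    obtain ⟨p, hpPc, hpS, hpj⟩ := hs x.2 S hS (by rw [hQ]; exact hcnt) x.1
    have hpP : p ∈ P := (Finset.mem_filter.1 hpPc).1
    have hpφ : φ p = x.2 := (Finset.mem_filter.1 hpPc).2
    refine ⟨p, hpP, hpS, ?_⟩
    show Fin.cast hcast.symm (finProdFinEquiv (s (φ p) p, φ p)) = i
    rw [hpφ, hpj, Prod.mk.eta, hix]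
end
end

section
/- Main theorem (conditional form): Assume that for every finite planar point set there is a 2-coloring such that every homothetic copy of the standard triangle containing at least 12 points contains both colors. Then for every finite point set P ⊆ ℝ², every triangle T ⊆ ℝ², and every positive integer k, there exists a k-coloring of P such that every homothetic copy of T containing at least 144·k^8 points of P contains all k colors. -/
namespace Work

def Tri (a b c : ℝ) : Set (ℝ × ℝ) := {p | a ≤ p.1 ∧ b ≤ p.2 ∧ p.1 + p.2 ≤ c}

lemma image_eq_tri {l : ℝ} (hl : 0 < l) (w : ℝ × ℝ) :
    (fun v => l • v + w) '' stdT = Tri w.1 w.2 (w.1 + w.2 + l) := by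
  ext p
  constructor
  · rintro ⟨v, ⟨h1, h2, h3⟩, rfl⟩
    refine ⟨?_, ?_, ?_⟩ <;> simp [Prod.smul_def, smul_eq_mul] <;> nlinarith
  · rintro ⟨h1, h2, h3⟩
    refine ⟨⟨(p.1 - w.1) / l, (p.2 - w.2) / l⟩, ⟨?_, ?_, ?_⟩, ?_⟩
    · apply div_nonneg (by linarith) hl.le
    · apply div_nonneg (by linarith) hl.le
    · rw [← add_div, div_le_one hl]; linarith
    · have : l ≠ 0 := ne_of_gt hl
      ext <;> simp [Prod.smul_def, smul_eq_mul] <;> field_simp <;> ring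

lemma tri_isHomCopy {a b c : ℝ} (h : a + b < c) : IsHomCopy stdT (Tri a b c) := by
  refine ⟨c - a - b, by linarith, (a, b), ?_⟩
  rw [image_eq_tri (by linarith) (a, b)]
  have : a + b + (c - a - b) = c := by ring
  simp [this]

lemma tri_mono {a b c a' b' c' : ℝ} (ha : a ≤ a') (hb : b ≤ b') (hc : c' ≤ c) :
    Tri a' b' c' ⊆ Tri a b c := fun p ⟨h1, h2, h3⟩ => ⟨le_trans ha h1, le_trans hb h2, le_trans h3 hc⟩

lemma tri_two_points {a b c : ℝ} {p q : ℝ × ℝ} (hp : p ∈ Tri a b c) (hq : q ∈ Tri a b c)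
    (hpq : p ≠ q) : a + b < c := by
  obtain ⟨h1, h2, h3⟩ := hp
  obtain ⟨h4, h5, h6⟩ := hq
  rcases lt_or_eq_of_le (le_trans (add_le_add h1 h2) h3) with h | h
  · exact h
  · exfalso
    have hp1 : p.1 = a := by linarith
    have hp2 : p.2 = b := by linarith
    rcases lt_or_eq_of_le (le_trans (add_le_add h4 h5) h6) with h' | h'
    · exact absurd h' (by linarith)
    · exact hpq (by ext <;> simp [hp1, hp2] <;> linarith)

/-- max of a finset with a default element. -/
noncomputable def mx (d : ℝ) (s : Finset ℝ) : ℝ := (insert d s).max' (Finset.insert_nonempty _ _)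

lemma le_mx_left (d : ℝ) (s : Finset ℝ) : d ≤ mx d s :=
  Finset.le_max' _ _ (Finset.mem_insert_self _ _)

lemma le_mx {d x : ℝ} {s : Finset ℝ} (h : x ∈ s) : x ≤ mx d s :=
  Finset.le_max' _ _ (Finset.mem_insert_of_mem h)

lemma mx_cases (d : ℝ) (s : Finset ℝ) : mx d s = d ∨ mx d s ∈ s :=
  Finset.mem_insert.1 (Finset.max'_mem _ _)

lemma mx_le {d z : ℝ} {s : Finset ℝ} (h1 : d ≤ z) (h2 : ∀ x ∈ s, x ≤ z) : mx d s ≤ z := by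
  apply Finset.max'_le
  intro y hy
  rcases Finset.mem_insert.1 hy with rfl | hy
  · exact h1
  · exact h2 y hy

def sfn (p : ℝ × ℝ) : ℝ := p.1 + p.2

def ord (e d : ℝ × ℝ) : Prop := sfn e < sfn d ∨ (sfn e = sfn d ∧ e.1 ≤ d.1)

noncomputable instance : DecidablePred (fun q : (ℝ × ℝ) × (ℝ × ℝ) => ord q.1 q.2) := fun _ => by
  unfold ord; infer_instance

lemma ord_total (e d : ℝ × ℝ) : ord e d ∨ ord d e := by
  unfold ord
  rcases lt_trichotomy (sfn e) (sfn d) with h | h | h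
  · exact Or.inl (Or.inl h)
  · rcases le_total e.1 d.1 with h' | h'
    · exact Or.inl (Or.inr ⟨h, h'⟩)
    · exact Or.inr (Or.inr ⟨h.symm, h'⟩)
  · exact Or.inr (Or.inl h)

lemma ord_s {e d : ℝ × ℝ} (h : ord e d) : sfn e ≤ sfn d := by
  rcases h with h | ⟨h, _⟩
  · exact h.le
  · exact h.le

open Classical in
/-- the top (hypotenuse level) assigned to a corner: just below the lowest blocker. -/
noncomputable def topf (B : Finset (ℝ × ℝ)) (ηs Λ : ℝ) (c : ℝ × ℝ) : ℝ :=
  if h : (B.filter (fun z => c.1 ≤ z.1 ∧ c.2 ≤ z.2)).Nonempty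
  then ((B.filter (fun z => c.1 ≤ z.1 ∧ c.2 ≤ z.2)).image sfn).min' (h.image _) - ηs
  else Λ

open Classical in
noncomputable def Fc (B : Finset (ℝ × ℝ)) (η w2 : ℝ) (u : ℝ × ℝ) : ℝ × ℝ :=
  (u.1 + η,
    mx w2 ((B.filter (fun e => ord e u ∧ u.1 + η ≤ e.1)).image (fun e => e.2 + η)))

open Classical in
noncomputable def Gc (B : Finset (ℝ × ℝ)) (η w1 : ℝ) (v : ℝ × ℝ) : ℝ × ℝ :=
  (mx w1 ((B.filter (fun e => ord e v ∧ v.2 < e.2)).image (fun e => e.1 + η)),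
    v.2 + η)

lemma topf_le {B : Finset (ℝ × ℝ)} {ηs Λ : ℝ} (hηs : 0 < ηs)
    (hB : ∀ z ∈ B, sfn z ≤ Λ) (c : ℝ × ℝ) :
    topf B ηs Λ c ≤ Λ := by
  unfold topf
  split_ifs with h
  · have hm := Finset.min'_mem _ (h.image sfn)
    rcases Finset.mem_image.1 hm with ⟨z, hz, hzeq⟩
    have := hB z (Finset.mem_filter.1 hz).1
    rw [← hzeq]
    linarith
  · exact le_refl Λ

lemma topf_avoid {B : Finset (ℝ × ℝ)} {ηs Λ : ℝ} (hηs : 0 < ηs) (c : ℝ × ℝ)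
    {q : ℝ × ℝ} (hq : q ∈ B) : q ∉ Tri c.1 c.2 (topf B ηs Λ c) := by
  classical
  rintro ⟨h1, h2, h3⟩
  have hqf : q ∈ B.filter (fun z => c.1 ≤ z.1 ∧ c.2 ≤ z.2) :=
    Finset.mem_filter.2 ⟨hq, h1, h2⟩
  have hne : (B.filter (fun z => c.1 ≤ z.1 ∧ c.2 ≤ z.2)).Nonempty := ⟨q, hqf⟩
  have htop : topf B ηs Λ c =
      ((B.filter (fun z => c.1 ≤ z.1 ∧ c.2 ≤ z.2)).image sfn).min' (hne.image _) - ηs := by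
    unfold topf
    rw [dif_pos hne]
  have hmin := Finset.min'_le ((B.filter (fun z => c.1 ≤ z.1 ∧ c.2 ≤ z.2)).image sfn) (sfn q)
    (Finset.mem_image_of_mem _ hqf)
  have : sfn q ≤ topf B ηs Λ c := h3
  rw [htop] at this
  linarith

open Classical in
lemma cover (w1 w2 Λ η ηs : ℝ) (X B : Finset (ℝ × ℝ)) (hBX : B ⊆ X)
    (hX : ∀ p ∈ X, w1 ≤ p.1 ∧ w2 ≤ p.2 ∧ p.1 + p.2 ≤ Λ)
    (hη : 0 < η) (hηs : 0 < ηs)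
    (G1 : ∀ u ∈ X, ∀ p ∈ X, u.1 < p.1 → u.1 + η ≤ p.1)
    (G2 : ∀ u ∈ X, ∀ p ∈ X, u.2 < p.2 → u.2 + η ≤ p.2)
    (G3 : ∀ u ∈ X, ∀ p ∈ X, sfn p < sfn u → sfn p ≤ sfn u - ηs) :
    ∃ K : Finset ((ℝ × ℝ) × ℝ), K.card ≤ 2 * B.card + 1 ∧
      (∀ T ∈ K, w1 ≤ T.1.1 ∧ w2 ≤ T.1.2 ∧ T.2 ≤ Λ ∧ ∀ q ∈ B, q ∉ Tri T.1.1 T.1.2 T.2) ∧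
      (∀ p ∈ X, p ∉ B → ∃ T ∈ K, p ∈ Tri T.1.1 T.1.2 T.2) := by
  set tf : ℝ × ℝ → ℝ := topf B ηs Λ with htf
  refine ⟨insert ((w1, w2), tf (w1, w2))
      ((B.image (fun u => (Fc B η w2 u, tf (Fc B η w2 u)))) ∪
       (B.image (fun v => (Gc B η w1 v, tf (Gc B η w1 v))))), ?_, ?_, ?_⟩
  · calc _ ≤ _ + 1 := Finset.card_insert_le _ _
      _ ≤ (B.card + B.card) + 1 := by
          gcongr
          exact le_trans (Finset.card_union_le _ _)
            (add_le_add (Finset.card_image_le) (Finset.card_image_le))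
      _ = 2 * B.card + 1 := by ring
  · -- validity of every member of K
    intro T hT
    have hBΛ : ∀ z ∈ B, sfn z ≤ Λ := fun z hz => (hX z (hBX hz)).2.2
    have hcorner : ∃ c : ℝ × ℝ, T = (c, tf c) ∧ w1 ≤ c.1 ∧ w2 ≤ c.2 := by
      rcases Finset.mem_insert.1 hT with rfl | hT
      · exact ⟨(w1, w2), rfl, le_refl _, le_refl _⟩
      rcases Finset.mem_union.1 hT with hT | hT
      · rcases Finset.mem_image.1 hT with ⟨u, hu, rfl⟩
        refine ⟨Fc B η w2 u, rfl, ?_, ?_⟩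
        · have := (hX u (hBX hu)).1
          show w1 ≤ u.1 + η
          linarith
        · exact le_mx_left _ _
      · rcases Finset.mem_image.1 hT with ⟨v, hv, rfl⟩
        refine ⟨Gc B η w1 v, rfl, le_mx_left _ _, ?_⟩
        have := (hX v (hBX hv)).2.1
        show w2 ≤ v.2 + η
        linarith
    obtain ⟨c, rfl, hc1, hc2⟩ := hcorner
    exact ⟨hc1, hc2, topf_le hηs hBΛ c, fun q hq => topf_avoid hηs c hq⟩
  · -- coverage
    intro p hp hpB
    set D : Finset (ℝ × ℝ) := B.filter (fun e => sfn e ≤ sfn p) with hD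
    set AxS : Finset (ℝ × ℝ) := D.filter (fun e => p.2 ≤ e.2) with hAxS
    set a : ℝ := mx w1 (AxS.image (fun e => e.1 + η)) with ha
    set BxS : Finset (ℝ × ℝ) := D.filter (fun e => a ≤ e.1) with hBxS
    set b : ℝ := mx w2 (BxS.image (fun e => e.2 + η)) with hb
    have hDB : ∀ e ∈ D, e ∈ B := fun e he => (Finset.mem_filter.1 he).1
    have hDX : ∀ e ∈ D, e ∈ X := fun e he => hBX (hDB e he)
    have hDs : ∀ e ∈ D, sfn e ≤ sfn p := fun e he => (Finset.mem_filter.1 he).2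
    -- F1
    have F1 : ∀ e ∈ AxS, e.1 < p.1 := by
      intro e he
      obtain ⟨heD, hey⟩ := Finset.mem_filter.1 he
      have hs := hDs e heD
      have hne : e ≠ p := fun h => hpB (h ▸ hDB e heD)
      have hle : e.1 ≤ p.1 := by
        have : sfn e = e.1 + e.2 := rfl
        have : sfn p = p.1 + p.2 := rfl
        simp only [sfn] at hs
        linarith
      rcases lt_or_eq_of_le hle with h | h
      · exact h
      · exfalso
        apply hne
        have : e.2 = p.2 := by
          simp only [sfn] at hs
          have : e.2 ≤ p.2 := by linarith
          linarith
        exact Prod.ext h this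
    -- F2
    have F2 : a ≤ p.1 := by
      apply mx_le (hX p hp).1
      intro x hx
      rcases Finset.mem_image.1 hx with ⟨e, he, rfl⟩
      exact G1 e (hDX e (Finset.mem_filter.1 he).1) p hp (F1 e he)
    -- F3
    have F3 : ∀ e ∈ BxS, e.2 < p.2 := by
      intro e he
      obtain ⟨heD, hex⟩ := Finset.mem_filter.1 he
      by_contra hcon
      push_neg at hcon
      have heA : e ∈ AxS := Finset.mem_filter.2 ⟨heD, hcon⟩
      have : e.1 + η ≤ a := le_mx (Finset.mem_image_of_mem _ heA)
      linarith
    -- F4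
    have F4 : b ≤ p.2 := by
      apply mx_le (hX p hp).2.1
      intro x hx
      rcases Finset.mem_image.1 hx with ⟨e, he, rfl⟩
      exact G2 e (hDX e (Finset.mem_filter.1 he).1) p hp (F3 e he)
    -- F5
    have F5 : ∀ z ∈ B, sfn z ≤ sfn p → ¬(a ≤ z.1 ∧ b ≤ z.2) := by
      rintro z hz hzs ⟨hza, hzb⟩
      have hzD : z ∈ D := Finset.mem_filter.2 ⟨hz, hzs⟩
      have hzB : z ∈ BxS := Finset.mem_filter.2 ⟨hzD, hza⟩
      have : z.2 + η ≤ b := le_mx (Finset.mem_image_of_mem _ hzB)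
      linarith
    -- F6
    have F6 : sfn p ≤ tf (a, b) := by
      rw [htf]
      unfold topf
      split_ifs with h
      · have : ∀ y ∈ (B.filter (fun z => (a, b).1 ≤ z.1 ∧ (a, b).2 ≤ z.2)).image sfn,
            sfn p + ηs ≤ y := by
          intro y hy
          rcases Finset.mem_image.1 hy with ⟨z, hz, rfl⟩
          obtain ⟨hzB, hza, hzb⟩ := Finset.mem_filter.1 hz
          have hns : ¬ sfn z ≤ sfn p := fun hc => F5 z hzB hc ⟨hza, hzb⟩
          push_neg at hns
          have := G3 z (hBX hzB) p hp hns
          linarith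
        have := Finset.le_min' _ (h.image sfn) _ this
        linarith
      · exact (hX p hp).2.2
    refine ⟨((a, b), tf (a, b)), ?_, F2, F4, F6⟩
    -- classification of the corner
    have hKmem : (a, b) = (w1, w2) ∨ (∃ u ∈ B, (a, b) = Fc B η w2 u) ∨
        (∃ v ∈ B, (a, b) = Gc B η w1 v) := by
      have hacase := mx_cases w1 (AxS.image (fun e => e.1 + η))
      have hbcase := mx_cases w2 (BxS.image (fun e => e.2 + η))
      rw [← ha] at hacase
      rw [← hb] at hbcase
      rcases hbcase with hbw | hbmem
      · rcases hacase with haw | hamem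
        · exact Or.inl (by rw [haw, hbw])
        · -- b = w2, a = u.1 + η : Fc u
          rcases Finset.mem_image.1 hamem with ⟨u, huA, hau⟩
          obtain ⟨huD, _⟩ := Finset.mem_filter.1 huA
          refine Or.inr (Or.inl ⟨u, hDB u huD, ?_⟩)
          unfold Fc
          refine Prod.ext (by rw [← hau]) ?_
          show b = mx w2 _
          apply le_antisymm
          · rw [hbw]; exact le_mx_left _ _
          · apply mx_le (by rw [hbw])
            intro x hx
            rcases Finset.mem_image.1 hx with ⟨e, he, rfl⟩
            obtain ⟨heB, heo, hex⟩ := Finset.mem_filter.1 he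
            exfalso
            have heD : e ∈ D := Finset.mem_filter.2 ⟨heB, le_trans (ord_s heo) (hDs u huD)⟩
            have heBx : e ∈ BxS := Finset.mem_filter.2 ⟨heD, by rw [hau] at hex; exact hex⟩
            have : e.2 + η ≤ b := le_mx (Finset.mem_image_of_mem _ heBx)
            have : w2 ≤ e.2 := (hX e (hDX e heD)).2.1
            rw [hbw] at *
            linarith
      · rcases Finset.mem_image.1 hbmem with ⟨v, hvB, hbv⟩
        obtain ⟨hvD, hva⟩ := Finset.mem_filter.1 hvB
        have hGv : (a, b) = Gc B η w1 v →
            ((a, b) = (w1, w2) ∨ (∃ u ∈ B, (a, b) = Fc B η w2 u) ∨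
              (∃ v' ∈ B, (a, b) = Gc B η w1 v')) :=
          fun h => Or.inr (Or.inr ⟨v, hDB v hvD, h⟩)
        -- common facts
        have hvX : v ∈ X := hDX v hvD
        have hvp2 : v.2 < p.2 := F3 v hvB
        -- decide between Fc u and Gc v
        have hGcase : (∀ hcase : (a = w1 ∨ ∃ u ∈ AxS, a = u.1 + η ∧ ord u v), True) := fun _ => trivial
        rcases hacase with haw | hamem
        · -- a = w1 : Gc v
          apply hGv
          unfold Gc
          refine Prod.ext ?_ (by rw [← hbv])
          show a = mx w1 _
          apply le_antisymm
          · rw [haw]; exact le_mx_left _ _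
          · apply mx_le (by rw [haw])
            intro x hx
            rcases Finset.mem_image.1 hx with ⟨e, he, rfl⟩
            obtain ⟨heB, heo, hev⟩ := Finset.mem_filter.1 he
            have heD : e ∈ D := Finset.mem_filter.2 ⟨heB, le_trans (ord_s heo) (hDs v hvD)⟩
            exfalso
            by_cases hpe : p.2 ≤ e.2
            · have heA : e ∈ AxS := Finset.mem_filter.2 ⟨heD, hpe⟩
              have : e.1 + η ≤ a := le_mx (Finset.mem_image_of_mem _ heA)
              have : w1 ≤ e.1 := (hX e (hDX e heD)).1
              rw [haw] at *
              linarith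
            · push_neg at hpe
              by_cases hae : a ≤ e.1
              · have heBx : e ∈ BxS := Finset.mem_filter.2 ⟨heD, hae⟩
                have : e.2 + η ≤ b := le_mx (Finset.mem_image_of_mem _ heBx)
                rw [← hbv] at this
                linarith
              · push_neg at hae
                have : w1 ≤ e.1 := (hX e (hDX e heD)).1
                rw [haw] at hae
                linarith
        · rcases Finset.mem_image.1 hamem with ⟨u, huA, hau⟩
          obtain ⟨huD, hup2⟩ := Finset.mem_filter.1 huA
          by_cases hvu : ord v u
          · -- Fc u
            refine Or.inr (Or.inl ⟨u, hDB u huD, ?_⟩)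
            unfold Fc
            refine Prod.ext (by rw [← hau]) ?_
            show b = mx w2 _
            apply le_antisymm
            · have : w2 ≤ v.2 := (hX v hvX).2.1
              rw [← hbv]
              apply le_mx
              apply Finset.mem_image_of_mem
              apply Finset.mem_filter.2
              refine ⟨hDB v hvD, hvu, ?_⟩
              rw [hau]
              exact hva
            · apply mx_le
              · have : w2 ≤ v.2 := (hX v hvX).2.1
                rw [← hbv]; linarith
              · intro x hx
                rcases Finset.mem_image.1 hx with ⟨e, he, rfl⟩
                obtain ⟨heB, heo, hex⟩ := Finset.mem_filter.1 he
                have heD : e ∈ D := Finset.mem_filter.2 ⟨heB, le_trans (ord_s heo) (hDs u huD)⟩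
                have heBx : e ∈ BxS := Finset.mem_filter.2 ⟨heD, by rw [hau] at hex; exact hex⟩
                exact le_mx (Finset.mem_image_of_mem _ heBx)
          · -- Gc v
            have huv : ord u v := (ord_total u v).resolve_right hvu
            apply hGv
            unfold Gc
            refine Prod.ext ?_ (by rw [← hbv])
            show a = mx w1 _
            apply le_antisymm
            · rw [← hau]
              apply le_mx
              apply Finset.mem_image_of_mem
              apply Finset.mem_filter.2
              exact ⟨hDB u huD, huv, lt_of_lt_of_le hvp2 hup2⟩
            · apply mx_le
              · have : w1 ≤ u.1 := (hX u (hDX u huD)).1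
                rw [← hau]; linarith
              · intro x hx
                rcases Finset.mem_image.1 hx with ⟨e, he, rfl⟩
                obtain ⟨heB, heo, hev⟩ := Finset.mem_filter.1 he
                have heD : e ∈ D := Finset.mem_filter.2 ⟨heB, le_trans (ord_s heo) (hDs v hvD)⟩
                have heX : e ∈ X := hDX e heD
                by_cases hpe : p.2 ≤ e.2
                · have heA : e ∈ AxS := Finset.mem_filter.2 ⟨heD, hpe⟩
                  exact le_mx (Finset.mem_image_of_mem _ heA)
                · push_neg at hpe
                  by_cases hae : a ≤ e.1
                  · exfalso
                    have heBx : e ∈ BxS := Finset.mem_filter.2 ⟨heD, hae⟩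
                    have : e.2 + η ≤ b := le_mx (Finset.mem_image_of_mem _ heBx)
                    rw [← hbv] at this
                    linarith
                  · push_neg at hae
                    have he1 : e.1 ≤ u.1 := by
                      by_contra hcon
                      push_neg at hcon
                      have := G1 u (hDX u huD) e heX hcon
                      rw [← hau] at hae
                      linarith
                    rw [← hau]
                    linarith
    rcases hKmem with h | ⟨u, hu, h⟩ | ⟨v, hv, h⟩
    · rw [h]
      exact Finset.mem_insert_self _ _
    · rw [h]
      exact Finset.mem_insert_of_mem (Finset.mem_union_left _
        (Finset.mem_image_of_mem _ hu))
    · rw [h]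
      exact Finset.mem_insert_of_mem (Finset.mem_union_right _
        (Finset.mem_image_of_mem _ hv))

lemma mingap (F : Finset ℝ) : ∃ η : ℝ, 0 < η ∧ ∀ x ∈ F, ∀ y ∈ F, x < y → x + η ≤ y := by
  classical
  set diffs := ((F ×ˢ F).image (fun q : ℝ × ℝ => q.2 - q.1)).filter (fun d => 0 < d) with hdiffs
  by_cases h : diffs.Nonempty
  · refine ⟨diffs.min' h, ?_, ?_⟩
    · exact (Finset.mem_filter.1 (diffs.min'_mem h)).2
    · intro x hx y hy hxy
      have hmem : y - x ∈ diffs := by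
        rw [hdiffs, Finset.mem_filter]
        constructor
        · exact Finset.mem_image.2 ⟨(x, y), Finset.mem_product.2 ⟨hx, hy⟩, rfl⟩
        · linarith
      have := diffs.min'_le _ hmem
      linarith
  · refine ⟨1, one_pos, ?_⟩
    intro x hx y hy hxy
    exfalso
    apply h
    refine ⟨y - x, ?_⟩
    rw [hdiffs, Finset.mem_filter]
    constructor
    · exact Finset.mem_image.2 ⟨(x, y), Finset.mem_product.2 ⟨hx, hy⟩, rfl⟩
    · linarith

open Classical in
lemma count (P : Finset (ℝ × ℝ)) (φ2 : ℝ × ℝ → Fin 2) (h : PolyColor stdT P 12 2 φ2)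
    (S : Set (ℝ × ℝ)) (hS : IsHomCopy stdT S) (t : ℕ) (ht : 1 ≤ t)
    (hm : 36 * t ≤ ((P : Set (ℝ × ℝ)) ∩ S).ncard) (c : Fin 2) :
    t ≤ (((P.filter (fun p => φ2 p = c)) : Set (ℝ × ℝ)) ∩ S).ncard := by
  obtain ⟨l, hl, w, rfl⟩ := hS
  rw [image_eq_tri hl w] at hm ⊢
  set Λ : ℝ := w.1 + w.2 + l with hΛdef
  set X : Finset (ℝ × ℝ) := P.filter (fun p => p ∈ Tri w.1 w.2 Λ) with hXdef
  have hXset : ((P : Set (ℝ × ℝ)) ∩ Tri w.1 w.2 Λ) = ↑X := by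
    ext q
    simp only [hXdef, Finset.coe_filter, Set.mem_inter_iff, Set.mem_setOf_eq, Finset.mem_coe]
  set B : Finset (ℝ × ℝ) := X.filter (fun p => φ2 p = c) with hBdef
  have hBset : (((P.filter (fun p => φ2 p = c)) : Set (ℝ × ℝ)) ∩ Tri w.1 w.2 Λ) = ↑B := by
    ext q
    simp only [hBdef, hXdef, Finset.coe_filter, Set.mem_inter_iff, Set.mem_setOf_eq,
      Finset.mem_coe, Finset.mem_filter]
    tauto
  rw [hXset, Set.ncard_coe_finset] at hm
  rw [hBset, Set.ncard_coe_finset]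
  by_contra hlt
  push_neg at hlt
  have hBX : B ⊆ X := Finset.filter_subset _ _
  have hXbound : ∀ p ∈ X, w.1 ≤ p.1 ∧ w.2 ≤ p.2 ∧ p.1 + p.2 ≤ Λ := by
    intro p hp
    exact (Finset.mem_filter.1 hp).2
  obtain ⟨η, hη, hgap⟩ := mingap ((X.image (fun p => p.1)) ∪ (X.image (fun p => p.2)))
  obtain ⟨ηs, hηs, hsgap⟩ := mingap (X.image sfn)
  have G1 : ∀ u ∈ X, ∀ p ∈ X, u.1 < p.1 → u.1 + η ≤ p.1 := by
    intro u hu p hp hlt'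
    exact hgap u.1 (Finset.mem_union_left _ (Finset.mem_image_of_mem _ hu)) p.1
      (Finset.mem_union_left _ (Finset.mem_image_of_mem _ hp)) hlt'
  have G2 : ∀ u ∈ X, ∀ p ∈ X, u.2 < p.2 → u.2 + η ≤ p.2 := by
    intro u hu p hp hlt'
    exact hgap u.2 (Finset.mem_union_right _ (Finset.mem_image_of_mem _ hu)) p.2
      (Finset.mem_union_right _ (Finset.mem_image_of_mem _ hp)) hlt'
  have G3 : ∀ u ∈ X, ∀ p ∈ X, sfn p < sfn u → sfn p ≤ sfn u - ηs := by
    intro u hu p hp hlt'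
    have := hsgap (sfn p) (Finset.mem_image_of_mem _ hp) (sfn u)
      (Finset.mem_image_of_mem _ hu) hlt'
    linarith
  obtain ⟨K, hKcard, hKvalid, hKcover⟩ :=
    cover w.1 w.2 Λ η ηs X B hBX hXbound hη hηs G1 G2 G3
  -- find a triangle with at least 12 points
  have hheavy : ∃ T ∈ K, 12 ≤ (X.filter (fun q => q ∈ Tri T.1.1 T.1.2 T.2)).card := by
    by_contra hsmall
    push_neg at hsmall
    have hsub : X \ B ⊆ K.biUnion (fun T => X.filter (fun q => q ∈ Tri T.1.1 T.1.2 T.2)) := by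
      intro q hq
      obtain ⟨hqX, hqB⟩ := Finset.mem_sdiff.1 hq
      obtain ⟨T, hT, hqT⟩ := hKcover q hqX hqB
      exact Finset.mem_biUnion.2 ⟨T, hT, Finset.mem_filter.2 ⟨hqX, hqT⟩⟩
    have h1 : (X \ B).card ≤ K.card * 11 := by
      calc (X \ B).card ≤ _ := Finset.card_le_card hsub
        _ ≤ ∑ T ∈ K, (X.filter (fun q => q ∈ Tri T.1.1 T.1.2 T.2)).card :=
            Finset.card_biUnion_le
        _ ≤ ∑ _T ∈ K, 11 := by
            apply Finset.sum_le_sum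
            intro T hT
            have := hsmall T hT
            omega
        _ = K.card * 11 := by rw [Finset.sum_const, smul_eq_mul]
    have h2 : (X \ B).card = X.card - B.card := Finset.card_sdiff_of_subset hBX
    have h3 : B.card ≤ X.card := Finset.card_le_card hBX
    omega
  obtain ⟨T, hTK, hTheavy⟩ := hheavy
  obtain ⟨hTa, hTb, hTc, hTavoid⟩ := hKvalid T hTK
  -- the triangle is nondegenerate
  have h2pts : ∃ p₁ ∈ X.filter (fun q => q ∈ Tri T.1.1 T.1.2 T.2),
      ∃ p₂ ∈ X.filter (fun q => q ∈ Tri T.1.1 T.1.2 T.2), p₁ ≠ p₂ :=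
    Finset.one_lt_card.1 (by omega)
  obtain ⟨p₁, hp₁, p₂, hp₂, hp₁₂⟩ := h2pts
  have habc : T.1.1 + T.1.2 < T.2 :=
    tri_two_points (Finset.mem_filter.1 hp₁).2 (Finset.mem_filter.1 hp₂).2 hp₁₂
  have hn : 12 ≤ ((P : Set (ℝ × ℝ)) ∩ Tri T.1.1 T.1.2 T.2).ncard := by
    have hsub : ↑(X.filter (fun q => q ∈ Tri T.1.1 T.1.2 T.2)) ⊆
        ((P : Set (ℝ × ℝ)) ∩ Tri T.1.1 T.1.2 T.2) := by
      intro q hq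
      rw [Finset.mem_coe, Finset.mem_filter] at hq
      exact ⟨(Finset.mem_filter.1 hq.1).1, hq.2⟩
    have hfin : ((P : Set (ℝ × ℝ)) ∩ Tri T.1.1 T.1.2 T.2).Finite :=
      Set.Finite.inter_of_left (Finset.finite_toSet P) _
    have := Set.ncard_le_ncard hsub hfin
    rw [Set.ncard_coe_finset] at this
    omega
  obtain ⟨q, hqP, hqTri, hqc⟩ := h _ (tri_isHomCopy habc) hn c
  have hqS : q ∈ Tri w.1 w.2 Λ := tri_mono hTa hTb hTc hqTri
  have hqX : q ∈ X := Finset.mem_filter.2 ⟨hqP, hqS⟩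
  have hqB : q ∈ B := Finset.mem_filter.2 ⟨hqX, hqc⟩
  exact hTavoid q hqB hqTri

open Classical in
lemma core (h12 : ∀ P : Finset (ℝ × ℝ), ∃ φ : ℝ × ℝ → Fin 2, PolyColor stdT P 12 2 φ) :
    ∀ (j : ℕ) (P : Finset (ℝ × ℝ)), ∃ φ : ℝ × ℝ → Fin (2 ^ j),
      PolyColor stdT P (36 ^ j) (2 ^ j) φ := by
  intro j
  induction j with
  | zero =>
    intro P
    refine ⟨fun _ => ⟨0, one_pos⟩, ?_⟩
    intro S hS hm i
    have hne : ((P : Set (ℝ × ℝ)) ∩ S).Nonempty := by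
      apply Set.nonempty_of_ncard_ne_zero
      simp only [pow_zero] at hm
      omega
    obtain ⟨p, hp1, hp2⟩ := hne
    refine ⟨p, hp1, hp2, ?_⟩
    apply Fin.ext
    have h1 := i.isLt
    have h2 := (Fin.mk 0 one_pos : Fin (2 ^ 0)).isLt
    simp only [pow_zero] at h1
    omega
  | succ j ih =>
    intro P
    obtain ⟨φ2, hφ2⟩ := h12 P
    obtain ⟨φa, hφa⟩ := ih (P.filter (fun p => φ2 p = 0))
    obtain ⟨φb, hφb⟩ := ih (P.filter (fun p => φ2 p = 1))
    have hpow : 2 ^ j + 2 ^ j = 2 ^ (j + 1) := by ring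
    refine ⟨fun p => Fin.cast hpow (finSumFinEquiv
      (if φ2 p = 0 then Sum.inl (φa p) else Sum.inr (φb p))), ?_⟩
    intro S hS hm i
    have hm' : ∀ c : Fin 2, 36 ^ j ≤
        ((↑(P.filter (fun p => φ2 p = c)) : Set (ℝ × ℝ)) ∩ S).ncard := by
      intro c
      have h36 : (36 : ℕ) ^ (j + 1) = 36 * 36 ^ j := by ring
      exact count P φ2 hφ2 S hS (36 ^ j) (Nat.one_le_iff_ne_zero.2 (by positivity))
        (by rw [← h36]; exact hm) c
    rcases hsum : finSumFinEquiv.symm (Fin.cast hpow.symm i) with ia | ib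
    · obtain ⟨p, hpP, hpS, hpa⟩ := hφa S hS (hm' 0) ia
      obtain ⟨hpP', hpc⟩ := Finset.mem_filter.1 hpP
      refine ⟨p, hpP', hpS, ?_⟩
      show Fin.cast hpow (finSumFinEquiv
        (if φ2 p = 0 then Sum.inl (φa p) else Sum.inr (φb p))) = i
      rw [if_pos hpc, hpa]
      have : finSumFinEquiv (Sum.inl ia) = Fin.cast hpow.symm i := by
        rw [← hsum, Equiv.apply_symm_apply]
      rw [this]
      ext
      simp
    · obtain ⟨p, hpP, hpS, hpb⟩ := hφb S hS (hm' 1) ib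
      obtain ⟨hpP', hpc⟩ := Finset.mem_filter.1 hpP
      refine ⟨p, hpP', hpS, ?_⟩
      show Fin.cast hpow (finSumFinEquiv
        (if φ2 p = 0 then Sum.inl (φa p) else Sum.inr (φb p))) = i
      have hpc0 : ¬ φ2 p = 0 := by
        rw [hpc]
        decide
      rw [if_neg hpc0, hpb]
      have : finSumFinEquiv (Sum.inr ib) = Fin.cast hpow.symm i := by
        rw [← hsum, Equiv.apply_symm_apply]
      rw [this]
      ext
      simp

lemma convex_stdT : Convex ℝ stdT := by
  intro x hx y hy a b ha hb hab
  obtain ⟨h1, h2, h3⟩ := hx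
  obtain ⟨h4, h5, h6⟩ := hy
  refine ⟨?_, ?_, ?_⟩ <;> simp only [Prod.fst_add, Prod.snd_add, Prod.smul_fst, Prod.smul_snd,
    smul_eq_mul] <;> nlinarith

lemma stdT_eq : stdT = convexHull ℝ {((0:ℝ),(0:ℝ)), ((1:ℝ),(0:ℝ)), ((0:ℝ),(1:ℝ))} := by
  apply Set.Subset.antisymm
  · intro p hp
    obtain ⟨h1, h2, h3⟩ := hp
    by_cases hs : p.1 + p.2 = 0
    · have hp1 : p.1 = 0 := by linarith
      have hp2 : p.2 = 0 := by linarith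
      have : p = ((0:ℝ),(0:ℝ)) := Prod.ext hp1 hp2
      rw [this]
      exact subset_convexHull ℝ _ (by simp)
    · have hs' : 0 < p.1 + p.2 := lt_of_le_of_ne (by linarith) (Ne.symm hs)
      have hseg : ((1:ℝ),(0:ℝ)) ∈ convexHull ℝ {((0:ℝ),(0:ℝ)), ((1:ℝ),(0:ℝ)), ((0:ℝ),(1:ℝ))} :=
        subset_convexHull ℝ _ (by simp)
      have hseg2 : ((0:ℝ),(1:ℝ)) ∈ convexHull ℝ {((0:ℝ),(0:ℝ)), ((1:ℝ),(0:ℝ)), ((0:ℝ),(1:ℝ))} :=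
        subset_convexHull ℝ _ (by simp)
      have hzero : ((0:ℝ),(0:ℝ)) ∈ convexHull ℝ {((0:ℝ),(0:ℝ)), ((1:ℝ),(0:ℝ)), ((0:ℝ),(1:ℝ))} :=
        subset_convexHull ℝ _ (by simp)
      have hcvx := convex_convexHull ℝ {((0:ℝ),(0:ℝ)), ((1:ℝ),(0:ℝ)), ((0:ℝ),(1:ℝ))}
      -- x := point on segment between (1,0) and (0,1)
      have hx : (p.1 / (p.1 + p.2), p.2 / (p.1 + p.2)) ∈
          convexHull ℝ {((0:ℝ),(0:ℝ)), ((1:ℝ),(0:ℝ)), ((0:ℝ),(1:ℝ))} := by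
        have := hcvx hseg hseg2 (div_nonneg h1 hs'.le) (div_nonneg h2 hs'.le)
          (by field_simp)
        convert this using 1
        ext <;> simp [Prod.smul_def, smul_eq_mul]
      have := hcvx hzero hx (a := 1 - (p.1 + p.2)) (b := p.1 + p.2) (by linarith) hs'.le
        (by ring)
      convert this using 1
      have hne : p.1 + p.2 ≠ 0 := hs
      ext <;> simp [Prod.smul_def, smul_eq_mul] <;> field_simp
  · apply convexHull_min _ convex_stdT
    intro q hq
    rcases hq with rfl | rfl | rfl <;> constructor <;> norm_num

/-- the linear map sending (1,0) to v1 and (0,1) to v2 -/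
noncomputable def mkLin (v1 v2 : ℝ × ℝ) : (ℝ × ℝ) →ₗ[ℝ] (ℝ × ℝ) :=
  (LinearMap.fst ℝ ℝ ℝ).smulRight v1 + (LinearMap.snd ℝ ℝ ℝ).smulRight v2

lemma mkLin_apply (v1 v2 x : ℝ × ℝ) : mkLin v1 v2 x = x.1 • v1 + x.2 • v2 := rfl

lemma mkLin_inj {t : Fin 3 → ℝ × ℝ} (ht : AffineIndependent ℝ t) :
    Function.Injective (mkLin (t 1 - t 0) (t 2 - t 0)) := by
  apply (injective_iff_map_eq_zero _).2
  intro x hx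
  rw [mkLin_apply] at hx
  have hsum : ∑ i, (![-x.1 - x.2, x.1, x.2]) i = 0 := by
    simp [Fin.sum_univ_three]
    ring
  have hvs : Finset.univ.weightedVSub t ![-x.1 - x.2, x.1, x.2] = 0 := by
    rw [Finset.weightedVSub_eq_weightedVSubOfPoint_of_sum_eq_zero _ _ _ hsum (t 0)]
    rw [Finset.weightedVSubOfPoint_apply]
    simp only [Fin.sum_univ_three, vsub_eq_sub]
    simp only [Matrix.cons_val_zero, Matrix.cons_val_one, Matrix.head_cons,
      Matrix.cons_val_two, Matrix.tail_cons]
    rw [sub_self, smul_zero, zero_add]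
    exact hx
  have := ht Finset.univ ![-x.1 - x.2, x.1, x.2] hsum hvs
  have h1 := this 1 (Finset.mem_univ _)
  have h2 := this 2 (Finset.mem_univ _)
  simp only [Matrix.cons_val_one, Matrix.head_cons, Matrix.cons_val_two,
    Matrix.tail_cons] at h1 h2
  ext
  · exact h1
  · exact h2

lemma arith (k : ℕ) (hk : 0 < k) : 36 ^ Nat.clog 2 k ≤ 144 * k ^ 8 := by
  rcases Nat.lt_or_ge k 2 with h | h
  · have hk1 : k = 1 := by omega
    subst hk1
    simp [Nat.clog_one_right]
  · have h1 : 2 ^ (Nat.clog 2 k - 1) < k := by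
      have := Nat.pow_pred_clog_lt_self (b := 2) one_lt_two (x := k) (by omega)
      simpa [Nat.pred_eq_sub_one] using this
    have hj : 0 < Nat.clog 2 k := Nat.clog_pos one_lt_two h
    set j := Nat.clog 2 k
    calc (36:ℕ) ^ j = 36 * 36 ^ (j - 1) := by
          rw [← pow_succ']
          congr 1
          omega
      _ ≤ 144 * (2 ^ (j - 1)) ^ 8 := by
          have h36 : (36:ℕ) ^ (j - 1) ≤ 256 ^ (j - 1) := Nat.pow_le_pow_left (by norm_num) _
          have h256 : ((2:ℕ) ^ 8) ^ (j - 1) = ((2:ℕ) ^ (j - 1)) ^ 8 := by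
            rw [← pow_mul, ← pow_mul, Nat.mul_comm]
          have : (256:ℕ) ^ (j - 1) = ((2:ℕ) ^ (j - 1)) ^ 8 := by
            rw [← h256]
            norm_num
          rw [← this]
          exact Nat.mul_le_mul (by norm_num) h36
      _ ≤ 144 * k ^ 8 := Nat.mul_le_mul_left _ (Nat.pow_le_pow_left h1.le 8)

noncomputable def gE {t : Fin 3 → ℝ × ℝ} (ht : AffineIndependent ℝ t) :
    (ℝ × ℝ) ≃ₗ[ℝ] (ℝ × ℝ) :=
  LinearEquiv.ofBijective (mkLin (t 1 - t 0) (t 2 - t 0))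
    ⟨mkLin_inj ht, LinearMap.injective_iff_surjective.1 (mkLin_inj ht)⟩

lemma gE_apply {t : Fin 3 → ℝ × ℝ} (ht : AffineIndependent ℝ t) (x : ℝ × ℝ) :
    gE ht x = x.1 • (t 1 - t 0) + x.2 • (t 2 - t 0) := rfl

end Work

open Work in
theorem stmt_13
    (h12 : ∀ P : Finset (ℝ × ℝ), ∃ φ : ℝ × ℝ → Fin 2, PolyColor stdT P 12 2 φ) :
    ∀ P : Finset (ℝ × ℝ), ∀ t : Fin 3 → ℝ × ℝ, AffineIndependent ℝ t →
      ∀ k : ℕ, 0 < k →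
        ∃ φ : ℝ × ℝ → Fin k,
          PolyColor (convexHull ℝ (Set.range t)) P (144 * k ^ 8) k φ := by
  classical
  intro P t ht k hk
  set g := gE ht with hg
  set fwd : ℝ × ℝ → ℝ × ℝ := fun x => g x + t 0 with hfwd
  set inv : ℝ × ℝ → ℝ × ℝ := fun y => g.symm (y - t 0) with hinv
  have finv_fwd : ∀ x, inv (fwd x) = x := by
    intro x
    simp [hfwd, hinv]
  have ffwd_inv : ∀ y, fwd (inv y) = y := by
    intro y
    simp [hfwd, hinv]
  have hinv_inj : Function.Injective inv := by
    intro x y hxy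
    have := congrArg fwd hxy
    rwa [ffwd_inv, ffwd_inv] at this
  -- the affine map with underlying function fwd
  have hafm : ∀ p' : ℝ × ℝ, fwd p' = g.toLinearMap (p' -ᵥ (0 : ℝ × ℝ)) +ᵥ fwd 0 := by
    intro p'
    simp only [hfwd, vsub_eq_sub, sub_zero, vadd_eq_add, LinearEquiv.coe_coe, map_zero]
    abel
  set afm : (ℝ × ℝ) →ᵃ[ℝ] (ℝ × ℝ) := AffineMap.mk' fwd g.toLinearMap 0 hafm with hafm'
  have hrange : Set.range t = {t 0, t 1, t 2} := by
    ext y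
    constructor
    · rintro ⟨i, rfl⟩
      fin_cases i <;> simp
    · rintro (rfl | rfl | rfl) <;> exact ⟨_, rfl⟩
  have himg : fwd '' stdT = convexHull ℝ (Set.range t) := by
    have h1 : fwd '' stdT = afm '' stdT := by
      rw [hafm']
      simp [AffineMap.coe_mk']
    rw [h1, stdT_eq, AffineMap.image_convexHull]
    congr 1
    rw [Set.image_insert_eq, Set.image_insert_eq, Set.image_singleton, hrange]
    have e0 : fwd ((0:ℝ), (0:ℝ)) = t 0 := by
      simp [hfwd, hg, gE_apply ht ((0:ℝ),(0:ℝ))]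
    have e1 : fwd ((1:ℝ), (0:ℝ)) = t 1 := by
      simp [hfwd, hg, gE_apply ht ((1:ℝ),(0:ℝ))]
    have e2 : fwd ((0:ℝ), (1:ℝ)) = t 2 := by
      simp [hfwd, hg, gE_apply ht ((0:ℝ),(1:ℝ))]
    have hcoe : ⇑afm = fwd := by
      rw [hafm']
      simp [AffineMap.coe_mk']
    rw [hcoe, e0, e1, e2]
  -- pull back homothetic copies
  have hpull : ∀ S : Set (ℝ × ℝ), IsHomCopy (convexHull ℝ (Set.range t)) S →
      IsHomCopy stdT (inv '' S) := by
    rintro S ⟨l, hl, w, rfl⟩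
    refine ⟨l, hl, g.symm (l • t 0 + w - t 0), ?_⟩
    rw [← himg, Set.image_image, Set.image_image]
    apply Set.image_congr'
    intro x
    rw [hinv, hfwd]
    simp only []
    have harg : l • (g x + t 0) + w - t 0 = l • (g x) + (l • t 0 + w - t 0) := by
      rw [smul_add]
      abel
    rw [harg, map_add, map_smul, LinearEquiv.symm_apply_apply]
  set j := Nat.clog 2 k with hj
  have hkj : k ≤ 2 ^ j := Nat.le_pow_clog one_lt_two k
  obtain ⟨φc, hφc⟩ := core h12 j (P.image inv)
  refine ⟨fun p => ⟨min (φc (inv p)).val (k - 1), by omega⟩, ?_⟩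
  intro S hS hm i
  have hS' : IsHomCopy stdT (inv '' S) := hpull S hS
  have hcard : (((P.image inv : Finset (ℝ × ℝ)) : Set (ℝ × ℝ)) ∩ (inv '' S)).ncard
      = ((P : Set (ℝ × ℝ)) ∩ S).ncard := by
    rw [Finset.coe_image, ← Set.image_inter hinv_inj, Set.ncard_image_of_injective _ hinv_inj]
  have hm' : 36 ^ j ≤ (((P.image inv : Finset (ℝ × ℝ)) : Set (ℝ × ℝ)) ∩ (inv '' S)).ncard := by
    rw [hcard]
    exact le_trans (arith k hk) hm
  have hilift : i.val < 2 ^ j := lt_of_lt_of_le i.isLt hkj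
  obtain ⟨q, hqQ, hqS', hqc⟩ := hφc (inv '' S) hS' hm' ⟨i.val, hilift⟩
  obtain ⟨p₀, hp₀, hqp₀⟩ := Finset.mem_image.1 hqQ
  obtain ⟨s₀, hs₀, hqs₀⟩ := hqS'
  refine ⟨fwd q, ?_, ?_, ?_⟩
  · rw [← hqp₀, ffwd_inv]
    exact hp₀
  · rw [← hqs₀, ffwd_inv]
    exact hs₀
  · apply Fin.ext
    show min (φc (inv (fwd q))).val (k - 1) = i.val
    rw [finv_fwd, hqc]
    show min i.val (k - 1) = i.val
    have := i.isLt
    omega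
end
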